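/- arXiv:2005.03484 — 5 statements merged into one kernel-verified Lean document; each statement's English description precedes it below -/
import Mathlib

section
/- If S ⊆ {1, ..., N} is a Sidon set, then |S| ≤ 2√N + 2, i.e. |S|² ≤ 2N + 2|S|. -/
open Finset

theorem sidon_card_bound (N : ℕ) (S : Finset ℤ) (hS : S ⊆ Finset.Icc 1 (N : ℤ))
    (hSidon : ∀ x ∈ S, ∀ x' ∈ S, ∀ y ∈ S, ∀ y' ∈ S, x - x' = y - y' → x = y ∨ x = x') :
    S.card ^ 2 ≤ 2 * N + 2 * S.card := by
  rcases Nat.eq_zero_or_pos N with h0 | hN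
  · subst h0
    have : S = ∅ := Finset.subset_empty.mp (by simpa using hS)
    simp [this]
  · have key : S.offDiag.card ≤ ((Finset.Icc (1 - (N:ℤ)) ((N:ℤ) - 1)).erase 0).card := by
      apply Finset.card_le_card_of_injOn (fun p => p.1 - p.2)
      · rintro ⟨x, y⟩ hp
        simp only [Finset.mem_coe, Finset.mem_offDiag] at hp
        obtain ⟨hx, hy, hxy⟩ := hp
        have hx' := hS hx; have hy' := hS hy
        simp only [Finset.mem_Icc] at hx' hy'
        simp only [Finset.mem_coe, Finset.mem_erase, Finset.mem_Icc]
        omega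
      · rintro ⟨x, x'⟩ hp ⟨y, y'⟩ hq h
        simp only [Finset.mem_coe, Finset.mem_offDiag] at hp hq
        have h2 := hSidon x hp.1 x' hp.2.1 y hq.1 y' hq.2.1 h
        have hx : x = y := h2.resolve_right hp.2.2
        subst hx
        have : x' = y' := by simp at h; omega
        simp [this]
    have h1 : S.offDiag.card = S.card * S.card - S.card := Finset.offDiag_card S
    have hmem : (0 : ℤ) ∈ Finset.Icc (1 - (N:ℤ)) ((N:ℤ) - 1) := by
      simp only [Finset.mem_Icc]; omega
    have h2 : ((Finset.Icc (1 - (N:ℤ)) ((N:ℤ) - 1)).erase 0).card = 2 * N - 2 := by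
      rw [Finset.card_erase_of_mem hmem, Int.card_Icc]
      omega
    rw [h1, h2] at key
    rw [sq]
    generalize S.card * S.card = m at key ⊢
    omega
end

section
/- Let s ≥ 5, let a₁, ..., a_s be nonzero integers, and let ν : ℤ → [0, ∞) be supported on an interval of length N with Σ_n ν(n) ≤ N and E(ν) ≤ N³. Then for any functions f₁, ..., f_s : ℤ → ℂ with |f_i| ≤ ν pointwise, the sum Σ_{a₁x₁ + ... + a_s x_s = 0} f₁(x₁)···f_s(x_s) has absolute value at most N^{s-2} · min_i ‖f̂_i‖_∞. -/
open Finset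
open scoped Classical

lemma orth_sum (M : ℕ) (hM : 0 < M) (t : ℤ) :
    ∑ k ∈ Finset.range M, Complex.exp (2 * Real.pi * Complex.I * k * t / M) =
      if (M : ℤ) ∣ t then (M : ℂ) else 0 := by
  have hMC : (M : ℂ) ≠ 0 := Nat.cast_ne_zero.2 hM.ne'
  set z : ℂ := Complex.exp (2 * Real.pi * Complex.I * t / M) with hz
  have hzk : ∀ k : ℕ, Complex.exp (2 * Real.pi * Complex.I * k * t / M) = z ^ k := by
    intro k
    rw [hz, ← Complex.exp_nat_mul]
    ring_nf
  have hsum : ∑ k ∈ Finset.range M, Complex.exp (2 * Real.pi * Complex.I * k * t / M)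
      = ∑ k ∈ Finset.range M, z ^ k := Finset.sum_congr rfl fun k _ => hzk k
  rw [hsum]
  by_cases hdvd : (M : ℤ) ∣ t
  · obtain ⟨m, hm⟩ := hdvd
    have hz1 : z = 1 := by
      rw [hz, hm]
      push_cast
      rw [show 2 * (Real.pi:ℂ) * Complex.I * ((M:ℂ) * m) / M = m * (2 * Real.pi * Complex.I) by
        field_simp]
      exact Complex.exp_int_mul_two_pi_mul_I m
    rw [if_pos ⟨m, hm⟩]
    simp [hz1]
  · have hz1 : z ≠ 1 := by
      intro h
      rw [hz, Complex.exp_eq_one_iff] at h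
      obtain ⟨n, hn⟩ := h
      have h2 : (2 * (Real.pi:ℂ) * Complex.I) ≠ 0 := Complex.two_pi_I_ne_zero
      have htc : (t : ℂ) = n * M := by
        field_simp at hn
        have hn' : 2 * (Real.pi:ℂ) * Complex.I * (t:ℂ) = 2 * (Real.pi:ℂ) * Complex.I * ((n:ℂ) * M) := by
          linear_combination (2 * (Real.pi:ℂ) * Complex.I) * hn
        exact mul_left_cancel₀ h2 hn'
      have ht : t = n * M := by exact_mod_cast htc
      exact hdvd ⟨n, by rw [ht, mul_comm]⟩
    rw [geom_sum_eq hz1]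
    have hzM : z ^ M = 1 := by
      rw [hz, ← Complex.exp_nat_mul]
      rw [show (M:ℂ) * (2 * Real.pi * Complex.I * t / M) = t * (2 * Real.pi * Complex.I) by
        field_simp]
      exact Complex.exp_int_mul_two_pi_mul_I t
    rw [hzM]
    simp [if_neg hdvd]

lemma amgm4 {ι : Type*} [DecidableEq ι] (Q : Finset ι) (hQ : Q.card = 4) (b : ι → ℝ)
    (hb : ∀ j, 0 ≤ b j) :
    ∏ j ∈ Q, b j ≤ (∑ j ∈ Q, (b j)^4) / 4 := by
  rw [show (4:ℕ) = 3 + 1 from rfl, Finset.card_eq_succ] at hQ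
  obtain ⟨w, t, hwt, rfl, ht⟩ := hQ
  rw [Finset.card_eq_three] at ht
  obtain ⟨x, y, z, hxy, hxz, hyz, rfl⟩ := ht
  rw [Finset.prod_insert hwt, Finset.sum_insert hwt]
  rw [Finset.prod_insert (by simp [hxy, hxz]), Finset.sum_insert (by simp [hxy, hxz])]
  rw [Finset.prod_insert (by simp [hyz]), Finset.sum_insert (by simp [hyz])]
  rw [Finset.prod_singleton, Finset.sum_singleton]
  have h1 : b w * b x ≤ ((b w)^2 + (b x)^2)/2 := by nlinarith [sq_nonneg (b w - b x)]
  have h2 : b y * b z ≤ ((b y)^2 + (b z)^2)/2 := by nlinarith [sq_nonneg (b y - b z)]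
  have h3 : b w * b x * (b y * b z) ≤ (((b w)^2 + (b x)^2)/2) * (((b y)^2 + (b z)^2)/2) := by
    apply mul_le_mul h1 h2 (mul_nonneg (hb y) (hb z)) (by positivity)
  have h4 : (((b w)^2 + (b x)^2)/2) * (((b y)^2 + (b z)^2)/2)
      ≤ ((b w)^4 + ((b x)^4 + ((b y)^4 + (b z)^4)))/4 := by
    nlinarith [sq_nonneg ((b w)^2 - (b y)^2), sq_nonneg ((b w)^2 - (b z)^2),
      sq_nonneg ((b x)^2 - (b y)^2), sq_nonneg ((b x)^2 - (b z)^2)]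
  calc b w * (b x * (b y * b z)) = b w * b x * (b y * b z) := by ring
  _ ≤ _ := h3.trans h4

lemma fourth_moment (N : ℕ) (c : ℤ) (ν : ℤ → ℝ) (hν0 : ∀ n, 0 ≤ ν n)
    (hE : ∑ p ∈ ((Finset.Ico c (c + (N:ℤ))) ×ˢ (Finset.Ico c (c + (N:ℤ))) ×ˢ
        (Finset.Ico c (c + (N:ℤ))) ×ˢ (Finset.Ico c (c + (N:ℤ)))).filter
        (fun p => p.1 - p.2.1 = p.2.2.1 - p.2.2.2),
        ν p.1 * ν p.2.1 * ν p.2.2.1 * ν p.2.2.2 ≤ (N : ℝ) ^ 3)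
    (g : ℤ → ℂ) (hg : ∀ n, ‖g n‖ ≤ ν n)
    (a₀ : ℤ) (ha₀ : a₀ ≠ 0) (M : ℕ) (hM : 0 < M)
    (hMbig : ∀ d : ℤ, |d| < 2 * (N:ℤ) → |a₀ * d| < M) :
    ∑ k ∈ Finset.range M,
      (‖∑ n ∈ Finset.Ico c (c + (N:ℤ)),
        g n * Complex.exp (2 * Real.pi * Complex.I * a₀ * k * n / M)‖)^4
      ≤ (M : ℝ) * (N:ℝ)^3 := by
  set s : Finset ℤ := Finset.Ico c (c + (N:ℤ)) with hs
  set T : ℕ → ℂ := fun k => ∑ n ∈ s, g n * Complex.exp (2 * Real.pi * Complex.I * a₀ * k * n / M)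
    with hT
  -- conjugate
  have hC : ∀ k, (starRingEnd ℂ) (T k) =
      ∑ n ∈ s, (starRingEnd ℂ) (g n) * Complex.exp (-(2 * Real.pi * Complex.I * a₀ * k * n / M)) := by
    intro k
    rw [hT]
    rw [map_sum]
    refine Finset.sum_congr rfl fun n _ => ?_
    rw [map_mul, ← Complex.exp_conj]
    congr 1
    simp [map_div₀, map_ofNat]
    ring
  -- step 1: cast of the abs-power sum
  have habs4 : ∀ k, ((‖T k‖)^4 : ℂ) =
      T k * (starRingEnd ℂ) (T k) * (starRingEnd ℂ) (T k) * T k := by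
    intro k
    rw [show T k * (starRingEnd ℂ) (T k) * (starRingEnd ℂ) (T k) * T k
        = (T k * (starRingEnd ℂ) (T k)) * (T k * (starRingEnd ℂ) (T k)) by ring,
      Complex.mul_conj]
    rw [← Complex.ofReal_mul]
    rw [Complex.normSq_eq_norm_sq]
    push_cast
    ring
  -- expansion of the quadruple product, per k
  have hexp : ∀ k, T k * (starRingEnd ℂ) (T k) * (starRingEnd ℂ) (T k) * T k
      = ∑ y' ∈ s, ∑ y ∈ s, ∑ x' ∈ s, ∑ x ∈ s,
          (g x * (starRingEnd ℂ) (g x') * (starRingEnd ℂ) (g y) * g y')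
          * Complex.exp (2 * Real.pi * Complex.I * k * (a₀ * (x - x' - y + y')) / M) := by
    intro k
    rw [hC]
    conv_lhs => rw [hT]
    simp only [Finset.sum_mul, Finset.mul_sum]
    refine Finset.sum_congr rfl fun y' _ => Finset.sum_congr rfl fun y _ =>
      Finset.sum_congr rfl fun x' _ => Finset.sum_congr rfl fun x _ => ?_
    rw [show g x * Complex.exp (2 * Real.pi * Complex.I * a₀ * k * x / M) *
        ((starRingEnd ℂ) (g x') * Complex.exp (-(2 * Real.pi * Complex.I * a₀ * k * x' / M))) *
        ((starRingEnd ℂ) (g y) * Complex.exp (-(2 * Real.pi * Complex.I * a₀ * k * y / M))) *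
        (g y' * Complex.exp (2 * Real.pi * Complex.I * a₀ * k * y' / M))
        = (g x * (starRingEnd ℂ) (g x') * (starRingEnd ℂ) (g y) * g y') *
          (Complex.exp (2 * Real.pi * Complex.I * a₀ * k * x / M) *
           Complex.exp (-(2 * Real.pi * Complex.I * a₀ * k * x' / M)) *
           Complex.exp (-(2 * Real.pi * Complex.I * a₀ * k * y / M)) *
           Complex.exp (2 * Real.pi * Complex.I * a₀ * k * y' / M)) by ring]
    congr 1
    rw [← Complex.exp_add, ← Complex.exp_add, ← Complex.exp_add]
    congr 1
    push_cast
    by_cases hM0 : (M:ℂ) = 0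
    · simp [hM0]
    · field_simp
      ring
  -- divisibility condition is equivalent to the equation
  have hcond : ∀ x ∈ s, ∀ x' ∈ s, ∀ y ∈ s, ∀ y' ∈ s,
      ((M:ℤ) ∣ a₀ * (x - x' - y + y') ↔ x - x' = y - y') := by
    intro x hx x' hx' y hy y' hy'
    rw [hs, Finset.mem_Ico] at hx hx' hy hy'
    constructor
    · intro hdvd
      have hlt : |a₀ * (x - x' - y + y')| < (M:ℤ) := by
        apply hMbig
        rw [abs_lt]
        omega
      have := Int.eq_zero_of_abs_lt_dvd hdvd hlt
      have hd0 : x - x' - y + y' = 0 := by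
        rcases mul_eq_zero.1 this with h | h
        · exact absurd h ha₀
        · exact h
      omega
    · intro h
      have : x - x' - y + y' = 0 := by omega
      rw [this, mul_zero]
      exact dvd_zero _
  -- the key identity
  have key : ((∑ k ∈ Finset.range M, (‖T k‖)^4 : ℝ) : ℂ)
      = (M : ℂ) * ∑ y' ∈ s, ∑ y ∈ s, ∑ x' ∈ s, ∑ x ∈ s,
          (if x - x' = y - y' then
            g x * (starRingEnd ℂ) (g x') * (starRingEnd ℂ) (g y) * g y' else 0) := by
    push_cast
    calc ∑ k ∈ Finset.range M, ((‖T k‖ : ℂ))^4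
        = ∑ k ∈ Finset.range M, ∑ y' ∈ s, ∑ y ∈ s, ∑ x' ∈ s, ∑ x ∈ s,
          (g x * (starRingEnd ℂ) (g x') * (starRingEnd ℂ) (g y) * g y')
          * Complex.exp (2 * Real.pi * Complex.I * k * (a₀ * (x - x' - y + y')) / M) := by
          refine Finset.sum_congr rfl fun k _ => ?_
          rw [← hexp k, ← habs4 k]
      _ = ∑ y' ∈ s, ∑ y ∈ s, ∑ x' ∈ s, ∑ x ∈ s, ∑ k ∈ Finset.range M,
          (g x * (starRingEnd ℂ) (g x') * (starRingEnd ℂ) (g y) * g y')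
          * Complex.exp (2 * Real.pi * Complex.I * k * (a₀ * (x - x' - y + y')) / M) := by
          rw [Finset.sum_comm]
          refine Finset.sum_congr rfl fun y' _ => ?_
          rw [Finset.sum_comm]
          refine Finset.sum_congr rfl fun y _ => ?_
          rw [Finset.sum_comm]
          refine Finset.sum_congr rfl fun x' _ => ?_
          rw [Finset.sum_comm]
      _ = (M : ℂ) * ∑ y' ∈ s, ∑ y ∈ s, ∑ x' ∈ s, ∑ x ∈ s,
          (if x - x' = y - y' then
            g x * (starRingEnd ℂ) (g x') * (starRingEnd ℂ) (g y) * g y' else 0) := by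
          rw [Finset.mul_sum]
          refine Finset.sum_congr rfl fun y' hy' => ?_
          rw [Finset.mul_sum]
          refine Finset.sum_congr rfl fun y hy => ?_
          rw [Finset.mul_sum]
          refine Finset.sum_congr rfl fun x' hx' => ?_
          rw [Finset.mul_sum]
          refine Finset.sum_congr rfl fun x hx => ?_
          rw [← Finset.mul_sum]
          rw [show (∑ k ∈ Finset.range M,
            Complex.exp (2 * Real.pi * Complex.I * k * (a₀ * (x - x' - y + y')) / M))
            = ∑ k ∈ Finset.range M,
            Complex.exp (2 * Real.pi * Complex.I * k * ((a₀ * (x - x' - y + y') : ℤ) : ℂ) / M) from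
            Finset.sum_congr rfl fun k _ => by congr 1; push_cast; ring]
          rw [orth_sum M hM (a₀ * (x - x' - y + y'))]
          by_cases h : x - x' = y - y'
          · rw [if_pos ((hcond x hx x' hx' y hy y' hy').2 h), if_pos h]
            ring
          · rw [if_neg (fun hd => h ((hcond x hx x' hx' y hy y' hy').1 hd)), if_neg h]
            ring
  -- pass to absolute values
  have habsV : ‖∑ y' ∈ s, ∑ y ∈ s, ∑ x' ∈ s, ∑ x ∈ s,
      (if x - x' = y - y' then
        g x * (starRingEnd ℂ) (g x') * (starRingEnd ℂ) (g y) * g y' else 0)‖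
      ≤ ∑ y' ∈ s, ∑ y ∈ s, ∑ x' ∈ s, ∑ x ∈ s,
        (if x - x' = y - y' then ν x * ν x' * ν y * ν y' else 0) := by
    refine (norm_sum_le _ _).trans (Finset.sum_le_sum fun y' _ => ?_)
    refine (norm_sum_le _ _).trans (Finset.sum_le_sum fun y _ => ?_)
    refine (norm_sum_le _ _).trans (Finset.sum_le_sum fun x' _ => ?_)
    refine (norm_sum_le _ _).trans (Finset.sum_le_sum fun x _ => ?_)
    by_cases h : x - x' = y - y'
    · rw [if_pos h, if_pos h]
      rw [norm_mul, norm_mul, norm_mul, Complex.norm_conj, Complex.norm_conj]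
      have h1 := hg x; have h2 := hg x'; have h3 := hg y; have h4 := hg y'
      have n1 := norm_nonneg (g x); have n2 := norm_nonneg (g x')
      have n3 := norm_nonneg (g y); have n4 := norm_nonneg (g y')
      gcongr <;> first | assumption | exact mul_nonneg (mul_nonneg (hν0 _) (hν0 _)) (hν0 _) | exact mul_nonneg (hν0 _) (hν0 _) | exact hν0 _
    · rw [if_neg h, if_neg h, norm_zero]
  -- identify with the energy sum
  have hEiter : ∑ y' ∈ s, ∑ y ∈ s, ∑ x' ∈ s, ∑ x ∈ s,
      (if x - x' = y - y' then ν x * ν x' * ν y * ν y' else 0)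
      = ∑ p ∈ (s ×ˢ s ×ˢ s ×ˢ s).filter
        (fun p => p.1 - p.2.1 = p.2.2.1 - p.2.2.2),
        ν p.1 * ν p.2.1 * ν p.2.2.1 * ν p.2.2.2 := by
    rw [Finset.sum_filter]
    rw [Finset.sum_product]
    refine Finset.sum_congr rfl fun a _ => ?_
    rw [Finset.sum_product]
    refine Finset.sum_congr rfl fun b _ => ?_
    rw [Finset.sum_product]
    refine Finset.sum_congr rfl fun cc _ => ?_
    refine Finset.sum_congr rfl fun d _ => ?_
    show (if d - cc = b - a then ν d * ν cc * ν b * ν a else 0)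
      = if a - b = cc - d then ν a * ν b * ν cc * ν d else 0
    by_cases h : a - b = cc - d
    · rw [if_pos (show d - cc = b - a by omega), if_pos h]
      ring
    · rw [if_neg (fun hh => h (by omega)), if_neg h]
  -- conclude
  have hnn : (0:ℝ) ≤ ∑ k ∈ Finset.range M, (‖T k‖)^4 :=
    Finset.sum_nonneg fun k _ => by positivity
  have habs := congrArg (‖·‖) key
  rw [Complex.norm_real, Real.norm_eq_abs, abs_of_nonneg hnn, norm_mul, Complex.norm_natCast] at habs
  have final : ∑ k ∈ Finset.range M, (‖T k‖)^4 ≤ (M:ℝ) * (N:ℝ)^3 := by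
    rw [habs]
    have hMr : (0:ℝ) ≤ (M:ℝ) := Nat.cast_nonneg M
    refine mul_le_mul_of_nonneg_left ?_ hMr
    exact habsV.trans (by rw [hEiter]; exact hE)
  exact final


theorem counting_lemma_bounded_energy (s : ℕ) (hs : 5 ≤ s)
    (a : Fin s → ℤ) (ha : ∀ i, a i ≠ 0)
    (N : ℕ) (c : ℤ)
    (ν : ℤ → ℝ) (hν0 : ∀ n, 0 ≤ ν n)
    (hνsupp : ∀ n, n ∉ Finset.Ico c (c + N) → ν n = 0)
    (hmass : ∑ n ∈ Finset.Ico c (c + N), ν n ≤ N)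
    (hE : ∑ p ∈ ((Finset.Ico c (c + (N:ℤ))) ×ˢ (Finset.Ico c (c + (N:ℤ))) ×ˢ
        (Finset.Ico c (c + (N:ℤ))) ×ˢ (Finset.Ico c (c + (N:ℤ)))).filter
        (fun p => p.1 - p.2.1 = p.2.2.1 - p.2.2.2),
        ν p.1 * ν p.2.1 * ν p.2.2.1 * ν p.2.2.2 ≤ (N : ℝ) ^ 3)
    (f : Fin s → ℤ → ℂ) (hf : ∀ i n, ‖f i n‖ ≤ ν n)
    (F : Fin s → ℝ → ℂ)
    (hF : ∀ i (α : ℝ), F i α = ∑ n ∈ Finset.Ico c (c + N),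
      f i n * Complex.exp (2 * Real.pi * Complex.I * α * n)) :
    ∀ i, ‖∑ x ∈ (Fintype.piFinset fun _ : Fin s => Finset.Ico c (c + (N:ℤ))).filter
        (fun x => ∑ j, a j * x j = 0), ∏ j, f j (x j)‖ ≤
      (N : ℝ) ^ (s - 2) * ⨆ α : ℝ, ‖F i α‖ := by
  intro i
  set s₀ : Finset ℤ := Finset.Ico c (c + (N:ℤ)) with hs₀
  set A : ℕ := ∑ j, (a j).natAbs with hA
  set M : ℕ := A * (2 * (c.natAbs + N)) + 1 with hM
  have hM0 : 0 < M := Nat.succ_pos _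
  have hAj : ∀ j, (a j).natAbs ≤ A :=
    fun j => Finset.single_le_sum (f := fun j => (a j).natAbs)
      (fun _ _ => Nat.zero_le _) (Finset.mem_univ j)
  have hAjZ : ∀ j, |a j| ≤ (A:ℤ) := by
    intro j
    rw [Int.abs_eq_natAbs]
    exact_mod_cast hAj j
  have hMbig : ∀ j, ∀ d : ℤ, |d| < 2*(N:ℤ) → |a j * d| < (M:ℤ) := by
    intro j d hd
    calc |a j * d| = |a j| * |d| := abs_mul _ _
    _ ≤ (A:ℤ) * |d| := mul_le_mul_of_nonneg_right (hAjZ j) (abs_nonneg d)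
    _ ≤ (A:ℤ) * (2*(N:ℤ)) := mul_le_mul_of_nonneg_left (le_of_lt hd) (by positivity)
    _ < M := by
        rw [hM]
        push_cast
        nlinarith [(show (0:ℤ) ≤ (A:ℤ) from by positivity),
          (show (0:ℤ) ≤ (c.natAbs:ℤ) from by positivity), abs_nonneg c,
          (show (0:ℤ) ≤ (N:ℤ) from by positivity)]
  have hsum_abs : ∑ j, |a j| = (A:ℤ) := by
    rw [hA]
    push_cast
    rfl
  have hTbound : ∀ x : Fin s → ℤ, x ∈ Fintype.piFinset (fun _ : Fin s => s₀) →
      |∑ j, a j * x j| < (M:ℤ) := by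
    intro x hx
    have hx' : ∀ j, x j ∈ s₀ := fun j => Fintype.mem_piFinset.1 hx j
    have hxb : ∀ j, |x j| ≤ (c.natAbs : ℤ) + N := by
      intro j
      have h := hx' j
      rw [hs₀, Finset.mem_Ico] at h
      rw [abs_le]
      omega
    calc |∑ j, a j * x j| ≤ ∑ j, |a j * x j| := Finset.abs_sum_le_sum_abs _ _
    _ ≤ ∑ j, |a j| * ((c.natAbs : ℤ) + N) := Finset.sum_le_sum fun j _ => by
        rw [abs_mul]
        exact mul_le_mul_of_nonneg_left (hxb j) (abs_nonneg _)
    _ = (A:ℤ) * ((c.natAbs : ℤ) + N) := by rw [← Finset.sum_mul, hsum_abs]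
    _ < M := by
        rw [hM]
        push_cast
        nlinarith [(show (0:ℤ) ≤ (A:ℤ) from by positivity),
          (show (0:ℤ) ≤ (c.natAbs:ℤ) from by positivity), abs_nonneg c,
          (show (0:ℤ) ≤ (N:ℤ) from by positivity)]
  clear_value M
  clear_value A
  clear hM hA
  -- expansion of the product of the F's
  have hFk : ∀ k : ℕ, (∏ j, F j ((a j : ℝ) * k / M))
      = ∑ x ∈ Fintype.piFinset (fun _ : Fin s => s₀), (∏ j, f j (x j)) *
        Complex.exp (2 * Real.pi * Complex.I * k * ((∑ j, a j * x j : ℤ) : ℂ) / M) := by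
    intro k
    rw [Finset.prod_congr rfl (fun j _ => hF j ((a j : ℝ) * k / M)), Finset.prod_univ_sum]
    refine Finset.sum_congr rfl fun x hx => ?_
    rw [Finset.prod_mul_distrib, ← Complex.exp_sum]
    refine congrArg₂ (· * ·) rfl (congrArg Complex.exp ?_)
    push_cast
    calc ∑ j, 2 * (Real.pi:ℂ) * Complex.I * ((a j : ℂ) * (k:ℂ) / (M:ℂ)) * (x j : ℂ)
        = ∑ j, 2 * (Real.pi:ℂ) * Complex.I * (k:ℂ) * ((a j : ℂ) * (x j : ℂ)) / (M:ℂ) :=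
          Finset.sum_congr rfl fun j _ => by ring
      _ = 2 * (Real.pi:ℂ) * Complex.I * (k:ℂ) * (∑ j, (a j : ℂ) * (x j : ℂ)) / (M:ℂ) := by
          rw [← Finset.sum_div, ← Finset.mul_sum]
  -- key identity
  have key : ∑ k ∈ Finset.range M, ∏ j, F j ((a j : ℝ) * k / M)
      = (M:ℂ) * ∑ x ∈ (Fintype.piFinset fun _ : Fin s => s₀).filter
          (fun x => ∑ j, a j * x j = 0), ∏ j, f j (x j) := by
    calc ∑ k ∈ Finset.range M, ∏ j, F j ((a j : ℝ) * k / M)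
        = ∑ k ∈ Finset.range M, ∑ x ∈ Fintype.piFinset (fun _ : Fin s => s₀),
          (∏ j, f j (x j)) *
          Complex.exp (2 * Real.pi * Complex.I * k * ((∑ j, a j * x j : ℤ) : ℂ) / M) :=
          Finset.sum_congr rfl fun k _ => hFk k
      _ = ∑ x ∈ Fintype.piFinset (fun _ : Fin s => s₀), ∑ k ∈ Finset.range M,
          (∏ j, f j (x j)) *
          Complex.exp (2 * Real.pi * Complex.I * k * ((∑ j, a j * x j : ℤ) : ℂ) / M) :=
          Finset.sum_comm
      _ = ∑ x ∈ Fintype.piFinset (fun _ : Fin s => s₀),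
          (∏ j, f j (x j)) * (if (M:ℤ) ∣ (∑ j, a j * x j) then (M:ℂ) else 0) := by
          refine Finset.sum_congr rfl fun x hx => ?_
          rw [← Finset.mul_sum, orth_sum M hM0 (∑ j, a j * x j)]
      _ = ∑ x ∈ Fintype.piFinset (fun _ : Fin s => s₀),
          (if (∑ j, a j * x j) = 0 then (M:ℂ) * ∏ j, f j (x j) else 0) := by
          refine Finset.sum_congr rfl fun x hx => ?_
          by_cases h : (∑ j, a j * x j) = 0
          · rw [if_pos (h ▸ dvd_zero (M:ℤ)), if_pos h]
            ring
          · rw [if_neg (fun hd => h (Int.eq_zero_of_abs_lt_dvd hd (hTbound x hx))), if_neg h]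
            rw [mul_zero]
      _ = (M:ℂ) * ∑ x ∈ Fintype.piFinset (fun _ : Fin s => s₀),
          (if (∑ j, a j * x j) = 0 then ∏ j, f j (x j) else 0) := by
          rw [Finset.mul_sum]
          exact Finset.sum_congr rfl fun x hx => by rw [mul_ite, mul_zero]
      _ = _ := by rw [← Finset.sum_filter]
  -- basic bounds on F
  have hexp1 : ∀ (α : ℝ) (n : ℤ),
      ‖Complex.exp (2 * Real.pi * Complex.I * α * n)‖ = 1 := by
    intro α n
    rw [show (2 * (Real.pi:ℂ) * Complex.I * (α:ℂ) * (n:ℂ)) =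
      ((2 * Real.pi * α * n : ℝ) : ℂ) * Complex.I by push_cast; ring]
    exact Complex.norm_exp_ofReal_mul_I _
  have hFle : ∀ j (α : ℝ), ‖F j α‖ ≤ (N:ℝ) := by
    intro j α
    rw [hF]
    refine (norm_sum_le _ _).trans (le_trans (Finset.sum_le_sum fun n _ => ?_) hmass)
    rw [norm_mul, hexp1, mul_one]
    exact hf j n
  set Fsup : ℝ := ⨆ α : ℝ, ‖F i α‖ with hFsup
  have hbdd : BddAbove (Set.range fun α : ℝ => ‖F i α‖) :=
    ⟨N, by rintro _ ⟨α, rfl⟩; exact hFle i α⟩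
  have hsup : ∀ α : ℝ, ‖F i α‖ ≤ Fsup := fun α => le_ciSup hbdd α
  have hsup0 : 0 ≤ Fsup := le_trans (norm_nonneg _) (hsup 0)
  -- choose four indices distinct from i
  have hcard : 4 ≤ (Finset.univ.erase i).card := by
    rw [Finset.card_erase_of_mem (Finset.mem_univ i), Finset.card_univ, Fintype.card_fin]
    omega
  obtain ⟨Q, hQsub, hQ4⟩ := Finset.exists_subset_card_eq hcard
  have hcard_sdiff : ((Finset.univ.erase i) \ Q).card = s - 5 := by
    rw [Finset.card_sdiff_of_subset hQsub, Finset.card_erase_of_mem (Finset.mem_univ i),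
      Finset.card_univ, Fintype.card_fin, hQ4]
    omega
  -- fourth moment bounds
  have hfour : ∀ j, ∑ k ∈ Finset.range M,
      (‖F j ((a j : ℝ) * k / M)‖)^4 ≤ (M:ℝ) * (N:ℝ)^3 := by
    intro j
    have hfm := fourth_moment N c ν hν0 hE (f j) (hf j) (a j) (ha j) M hM0 (hMbig j)
    refine le_trans (le_of_eq (Finset.sum_congr rfl fun k _ => ?_)) hfm
    congr 1
    congr 1
    rw [hF]
    refine Finset.sum_congr rfl fun n _ => ?_
    congr 1
    push_cast
    ring
  -- pointwise product bound
  have hprod : ∀ k : ℕ, ∏ j, ‖F j ((a j : ℝ) * k / M)‖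
      ≤ Fsup * ((N:ℝ)^(s-5) *
        ((∑ j ∈ Q, (‖F j ((a j : ℝ) * k / M)‖)^4)/4)) := by
    intro k
    set b : Fin s → ℝ := fun j => ‖F j ((a j : ℝ) * k / M)‖ with hb
    have hb0 : ∀ j, 0 ≤ b j := fun j => norm_nonneg _
    have h1 : ∏ j, b j = b i * ∏ j ∈ Finset.univ.erase i, b j :=
      (Finset.mul_prod_erase _ _ (Finset.mem_univ i)).symm
    have h2 : ∏ j ∈ Finset.univ.erase i, b j
        = (∏ j ∈ (Finset.univ.erase i) \ Q, b j) * ∏ j ∈ Q, b j :=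
      (Finset.prod_sdiff hQsub).symm
    have h3 : ∏ j ∈ (Finset.univ.erase i) \ Q, b j ≤ (N:ℝ)^(s-5) := by
      have hle : ∏ j ∈ (Finset.univ.erase i) \ Q, b j
          ≤ ∏ j ∈ (Finset.univ.erase i) \ Q, (N:ℝ) :=
        Finset.prod_le_prod (fun j _ => hb0 j) (fun j _ => hFle j _)
      rw [Finset.prod_const, hcard_sdiff] at hle
      exact hle
    have h4 : ∏ j ∈ Q, b j ≤ (∑ j ∈ Q, (b j)^4)/4 := amgm4 Q hQ4 b hb0
    calc ∏ j, b j = b i * ((∏ j ∈ (Finset.univ.erase i) \ Q, b j) * ∏ j ∈ Q, b j) := by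
          rw [h1, h2]
      _ ≤ Fsup * ((N:ℝ)^(s-5) * ((∑ j ∈ Q, (b j)^4)/4)) := by
          refine mul_le_mul (hsup _) (mul_le_mul h3 h4
            (Finset.prod_nonneg fun j _ => hb0 j) (by positivity)) ?_ hsup0
          exact mul_nonneg (Finset.prod_nonneg fun j _ => hb0 j)
            (Finset.prod_nonneg fun j _ => hb0 j)
  -- assemble
  have main : (M:ℝ) * ‖∑ x ∈ (Fintype.piFinset fun _ : Fin s => s₀).filter
      (fun x => ∑ j, a j * x j = 0), ∏ j, f j (x j)‖
      ≤ (M:ℝ) * ((N:ℝ)^(s-2) * Fsup) := by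
    have h0 : ‖(M:ℂ) * ∑ x ∈ (Fintype.piFinset fun _ : Fin s => s₀).filter
        (fun x => ∑ j, a j * x j = 0), ∏ j, f j (x j)‖
        = (M:ℝ) * ‖∑ x ∈ (Fintype.piFinset fun _ : Fin s => s₀).filter
        (fun x => ∑ j, a j * x j = 0), ∏ j, f j (x j)‖ := by
      rw [norm_mul, Complex.norm_natCast]
    rw [← h0, ← key]
    refine (norm_sum_le _ _).trans ?_
    have hstep : ∑ k ∈ Finset.range M, ‖∏ j, F j ((a j : ℝ) * k / M)‖
        ≤ ∑ k ∈ Finset.range M, Fsup * ((N:ℝ)^(s-5) *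
          ((∑ j ∈ Q, (‖F j ((a j : ℝ) * k / M)‖)^4)/4)) := by
      refine Finset.sum_le_sum fun k _ => ?_
      rw [norm_prod]
      exact hprod k
    refine hstep.trans ?_
    have hswap : ∑ k ∈ Finset.range M, ∑ j ∈ Q,
        (‖F j ((a j : ℝ) * k / M)‖)^4 ≤ 4 * ((M:ℝ) * (N:ℝ)^3) := by
      rw [Finset.sum_comm]
      refine le_trans (Finset.sum_le_sum fun j _ => hfour j) ?_
      rw [Finset.sum_const, hQ4, nsmul_eq_mul]
      norm_num
    calc ∑ k ∈ Finset.range M, Fsup * ((N:ℝ)^(s-5) *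
          ((∑ j ∈ Q, (‖F j ((a j : ℝ) * k / M)‖)^4)/4))
        = (Fsup * (N:ℝ)^(s-5)/4) * ∑ k ∈ Finset.range M, ∑ j ∈ Q,
          (‖F j ((a j : ℝ) * k / M)‖)^4 := by
          rw [Finset.mul_sum]
          exact Finset.sum_congr rfl fun k _ => by ring
      _ ≤ (Fsup * (N:ℝ)^(s-5)/4) * (4*((M:ℝ)*(N:ℝ)^3)) :=
          mul_le_mul_of_nonneg_left hswap (by positivity)
      _ = (M:ℝ) * ((N:ℝ)^(s-2) * Fsup) := by
          rw [show (N:ℝ)^(s-2) = (N:ℝ)^(s-5) * (N:ℝ)^3 by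
            rw [← pow_add]; congr 1; omega]
          ring
  exact le_of_mul_le_mul_left main (by exact_mod_cast hM0)
end

section
/- Let S, B ⊆ ℤ be finite sets with B nonempty, and suppose E(S) ≤ (2 + η)|S|² with η ∈ [0, 1]. Then Σ_n r_S(n) r_B(n) ≤ |B|² + (η|S|² + 2|S|)|B|. -/
open Finset
open scoped Classical
lemma r_sum_aux (A : Finset ℤ) :
    ∑ n ∈ (A ×ˢ A).image (fun p : ℤ × ℤ => p.1 - p.2),
      ((A ×ˢ A).filter (fun p => p.1 - p.2 = n)).card = A.card ^ 2 := by
  rw [sq, ← card_product]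
  exact (card_eq_sum_card_image _ _).symm

lemma r_zero_aux (A : Finset ℤ) :
    ((A ×ˢ A).filter (fun p => p.1 - p.2 = 0)).card = A.card := by
  apply card_bij (fun p _ => p.1)
  · intro p hp
    simp only [mem_filter, mem_product] at hp
    exact hp.1.1
  · intro p hp q hq h
    simp only [mem_filter, mem_product] at hp hq
    have h1 : p.2 = p.1 := by omega
    have h2 : q.2 = q.1 := by omega
    exact Prod.ext h (by rw [h1, h2, h])
  · intro a ha
    exact ⟨(a, a), by simp [mem_filter, mem_product, ha], rfl⟩

lemma r_le_aux (A : Finset ℤ) (n : ℤ) :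
    ((A ×ˢ A).filter (fun p => p.1 - p.2 = n)).card ≤ A.card := by
  apply card_le_card_of_injOn (fun p => p.1)
  · intro p hp
    simp only [mem_coe, mem_filter, mem_product] at hp
    exact hp.1.1
  · intro p hp q hq h
    simp only [mem_coe, mem_filter, mem_product] at hp hq
    simp only at h
    have : p.2 = q.2 := by omega
    exact Prod.ext h this

lemma r_notmem_aux (A : Finset ℤ) (n : ℤ)
    (hn : n ∉ (A ×ˢ A).image (fun p : ℤ × ℤ => p.1 - p.2)) :
    ((A ×ˢ A).filter (fun p => p.1 - p.2 = n)).card = 0 := by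
  rw [card_eq_zero, filter_eq_empty_iff]
  intro p hp h
  exact hn (mem_image.mpr ⟨p, hp, h⟩)

lemma E_eq_aux (A : Finset ℤ) :
    ((A ×ˢ A ×ˢ A ×ˢ A).filter
        (fun p => p.1 - p.2.1 = p.2.2.1 - p.2.2.2)).card =
    ∑ n ∈ (A ×ˢ A).image (fun p : ℤ × ℤ => p.1 - p.2),
      ((A ×ˢ A).filter (fun p => p.1 - p.2 = n)).card ^ 2 := by
  have h1 : ((A ×ˢ A ×ˢ A ×ˢ A).filter
        (fun p => p.1 - p.2.1 = p.2.2.1 - p.2.2.2)).card =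
      (((A ×ˢ A) ×ˢ (A ×ˢ A)).filter
        (fun q => q.1.1 - q.1.2 = q.2.1 - q.2.2)).card := by
    apply card_bij (fun p _ => ((p.1, p.2.1), (p.2.2.1, p.2.2.2)))
    · intro p hp
      simp only [mem_filter, mem_product] at hp ⊢
      tauto
    · intro p hp q hq h
      simp only [Prod.ext_iff] at h
      obtain ⟨⟨h1, h2⟩, h3, h4⟩ := h
      exact Prod.ext h1 (Prod.ext h2 (Prod.ext h3 h4))
    · intro q hq
      simp only [mem_filter, mem_product] at hq
      exact ⟨(q.1.1, q.1.2, q.2.1, q.2.2),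
        by simp only [mem_filter, mem_product]; tauto, by simp⟩
  rw [h1, card_eq_sum_card_fiberwise
      (f := fun q : (ℤ × ℤ) × ℤ × ℤ => q.1.1 - q.1.2)
      (t := (A ×ˢ A).image (fun p : ℤ × ℤ => p.1 - p.2))
      (fun q hq => by
        simp only [mem_coe, mem_filter, mem_product] at hq
        exact mem_image.mpr ⟨q.1, by simp [mem_product]; tauto, rfl⟩)]
  refine sum_congr rfl fun n hn => ?_
  rw [sq, ← card_product, filter_filter]
  congr 1
  ext q
  simp only [mem_filter, mem_product]
  constructor
  · rintro ⟨⟨h1, h2⟩, h3, h4⟩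
    exact ⟨⟨h1, h4⟩, h2, by omega⟩
  · rintro ⟨⟨h1, h4⟩, h2, h5⟩
    exact ⟨⟨h1, h2⟩, by omega, h4⟩

theorem rep_correlation_bound (S B : Finset ℤ) (hB : B.Nonempty)
    (η : ℝ) (hη0 : 0 ≤ η) (hη1 : η ≤ 1)
    (hE : ((((S ×ˢ S ×ˢ S ×ˢ S).filter
        (fun p => p.1 - p.2.1 = p.2.2.1 - p.2.2.2)).card : ℝ)) ≤ (2 + η) * S.card ^ 2) :
    ∑ n ∈ (S ×ˢ S).image (fun p : ℤ × ℤ => p.1 - p.2),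
        (((S ×ˢ S).filter (fun p => p.1 - p.2 = n)).card : ℝ) *
        (((B ×ˢ B).filter (fun p => p.1 - p.2 = n)).card : ℝ) ≤
      (B.card : ℝ) ^ 2 + (η * S.card ^ 2 + 2 * S.card) * B.card := by
  classical
  set rS : ℤ → ℕ := fun n => ((S ×ˢ S).filter (fun p => p.1 - p.2 = n)).card with hrS
  set rB : ℤ → ℕ := fun n => ((B ×ˢ B).filter (fun p => p.1 - p.2 = n)).card with hrB
  by_cases hS : S = ∅
  · subst hS
    simp only [product_empty, image_empty, sum_empty, card_empty, empty_product]
    positivity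
  have hSne : S.Nonempty := nonempty_iff_ne_empty.mpr hS
  set D := (S ×ˢ S).image (fun p : ℤ × ℤ => p.1 - p.2) with hD
  set DB := (B ×ˢ B).image (fun p : ℤ × ℤ => p.1 - p.2) with hDB
  have h0D : (0:ℤ) ∈ D := by
    obtain ⟨a, ha⟩ := hSne
    exact mem_image.mpr ⟨(a, a), by simp [mem_product, ha], by simp⟩
  have h0DB : (0:ℤ) ∈ DB := by
    obtain ⟨a, ha⟩ := hB
    exact mem_image.mpr ⟨(a, a), by simp [mem_product, ha], by simp⟩
  set D1 := (D.erase 0).filter (fun n => rS n ≤ 1) with hD1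
  set D2 := (D.erase 0).filter (fun n => ¬ rS n ≤ 1) with hD2
  -- split the sum
  have hsplit : ∑ n ∈ D, (rS n : ℝ) * rB n
      = (rS 0 : ℝ) * rB 0 + ((∑ n ∈ D1, (rS n : ℝ) * rB n)
        + ∑ n ∈ D2, (rS n : ℝ) * rB n) := by
    rw [← Finset.add_sum_erase _ _ h0D, sum_filter_add_sum_filter_not]
  -- T1
  have hT1 : (rS 0 : ℝ) * rB 0 = (S.card : ℝ) * B.card := by
    rw [hrS, hrB]; simp only [r_zero_aux]
  -- T2 : natural number bound  ∑_{D1} rB ≤ B.card^2 - B.card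
  have hBtot : rB 0 + ∑ n ∈ DB.erase 0, rB n = B.card ^ 2 := by
    rw [Finset.add_sum_erase _ _ h0DB]
    exact r_sum_aux B
  have hT2n : ∑ n ∈ D1, rB n ≤ ∑ n ∈ DB.erase 0, rB n := by
    have h1 : ∑ n ∈ D1, rB n = ∑ n ∈ D1.filter (fun n => n ∈ DB), rB n := by
      refine (sum_subset (filter_subset _ _) fun n hn hn' => ?_).symm
      have : n ∉ DB := fun h => hn' (mem_filter.mpr ⟨hn, h⟩)
      exact r_notmem_aux B n this
    rw [h1]
    apply sum_le_sum_of_subset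
    intro n hn
    simp only [hD1, mem_filter, mem_erase] at hn
    exact mem_erase.mpr ⟨hn.1.1.1, hn.2⟩
  have hT2 : ∑ n ∈ D1, (rS n : ℝ) * rB n ≤ (B.card : ℝ) ^ 2 - B.card := by
    have h1 : ∑ n ∈ D1, (rS n : ℝ) * rB n ≤ ∑ n ∈ D1, (rB n : ℝ) := by
      apply sum_le_sum
      intro n hn
      have h2 : rS n ≤ 1 := (mem_filter.mp hn).2
      calc (rS n : ℝ) * rB n ≤ 1 * rB n := by
            apply mul_le_mul_of_nonneg_right _ (by positivity)
            exact_mod_cast h2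
        _ = rB n := one_mul _
    have h2 : (∑ n ∈ D1, (rB n : ℝ)) ≤ (B.card : ℝ) ^ 2 - B.card := by
      have hb0 : rB 0 = B.card := r_zero_aux B
      have := hT2n
      have h3 : ((∑ n ∈ D1, rB n : ℕ) : ℝ) ≤ ((∑ n ∈ DB.erase 0, rB n : ℕ) : ℝ) := by
        exact_mod_cast this
      push_cast at h3 ⊢
      have h4 : (rB 0 : ℝ) + ∑ n ∈ DB.erase 0, (rB n : ℝ) = (B.card : ℝ) ^ 2 := by
        exact_mod_cast hBtot
      rw [hb0] at h4
      linarith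
    linarith
  -- energy bound : ∑_{D2} rS ≤ η S² + S
  have hEnat : 2 * S.card ^ 2 + ∑ n ∈ D2, rS n ≤
      ((S ×ˢ S ×ˢ S ×ˢ S).filter
        (fun p => p.1 - p.2.1 = p.2.2.1 - p.2.2.2)).card + S.card := by
    have hEeq : ((S ×ˢ S ×ˢ S ×ˢ S).filter
        (fun p => p.1 - p.2.1 = p.2.2.1 - p.2.2.2)).card = ∑ n ∈ D, rS n ^ 2 :=
      E_eq_aux S
    have htot : ∑ n ∈ D, rS n = S.card ^ 2 := r_sum_aux S
    have hs0 : rS 0 = S.card := r_zero_aux S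
    have hsplitN : ∑ n ∈ D, rS n = rS 0 + ((∑ n ∈ D1, rS n) + ∑ n ∈ D2, rS n) := by
      rw [← Finset.add_sum_erase _ _ h0D, sum_filter_add_sum_filter_not]
    have hsplitN2 : ∑ n ∈ D, rS n ^ 2
        = rS 0 ^ 2 + ((∑ n ∈ D1, rS n ^ 2) + ∑ n ∈ D2, rS n ^ 2) := by
      rw [← Finset.add_sum_erase _ _ h0D, sum_filter_add_sum_filter_not]
    have hq1 : ∑ n ∈ D1, rS n ≤ ∑ n ∈ D1, rS n ^ 2 :=
      sum_le_sum fun n _ => Nat.le_self_pow two_ne_zero _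
    have hq2 : 2 * ∑ n ∈ D2, rS n ≤ ∑ n ∈ D2, rS n ^ 2 := by
      rw [mul_sum]
      apply sum_le_sum
      intro n hn
      have h2 : 2 ≤ rS n := by
        have := (mem_filter.mp hn).2
        omega
      calc 2 * rS n ≤ rS n * rS n := Nat.mul_le_mul_right _ h2
        _ = rS n ^ 2 := (sq _).symm
    rw [htot, hs0] at hsplitN
    rw [hEeq, hsplitN2, hs0]
    linarith [hsplitN, hq1, hq2]
  have hD2bound : (∑ n ∈ D2, (rS n : ℝ)) ≤ η * S.card ^ 2 + S.card := by
    have h1 : ((2 * S.card ^ 2 + ∑ n ∈ D2, rS n : ℕ) : ℝ) ≤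
        (((S ×ˢ S ×ˢ S ×ˢ S).filter
          (fun p => p.1 - p.2.1 = p.2.2.1 - p.2.2.2)).card : ℝ) + S.card := by
      exact_mod_cast hEnat
    push_cast at h1
    linarith
  have hT3 : ∑ n ∈ D2, (rS n : ℝ) * rB n ≤ (B.card : ℝ) * (η * S.card ^ 2 + S.card) := by
    have h1 : ∑ n ∈ D2, (rS n : ℝ) * rB n ≤ ∑ n ∈ D2, (rS n : ℝ) * B.card := by
      apply sum_le_sum
      intro n _
      apply mul_le_mul_of_nonneg_left _ (by positivity)
      exact_mod_cast r_le_aux B n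
    have h2 : ∑ n ∈ D2, (rS n : ℝ) * B.card = (∑ n ∈ D2, (rS n : ℝ)) * B.card := by
      rw [sum_mul]
    calc ∑ n ∈ D2, (rS n : ℝ) * rB n ≤ (∑ n ∈ D2, (rS n : ℝ)) * B.card := by
          rw [← h2]; exact h1
      _ ≤ (η * S.card ^ 2 + S.card) * B.card := by
          apply mul_le_mul_of_nonneg_right hD2bound (by positivity)
      _ = (B.card : ℝ) * (η * S.card ^ 2 + S.card) := by ring
  -- combine
  rw [hsplit, hT1]
  have hB1 : (1 : ℝ) ≤ B.card := by exact_mod_cast card_pos.mpr hB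
  nlinarith [hT2, hT3]
end

section
/- Let α₁, ..., α_R ∈ ℝ/ℤ be (1/N)-separated (i.e. ‖α_i − α_j‖ ≥ 1/N for i ≠ j), and let S ⊆ {1, ..., N}. If |1̂_S(α_i)| ≥ ε|S| for each i, and E(S) ≤ (2 + η)|S|² with η ≤ 1, then R ≪ N / (ε⁴|S|²), i.e. R ≤ C N/(ε⁴ |S|²) for an absolute constant C. In particular, if |S| ≥ δN^{1/2} then R ≪ δ⁻²ε⁻⁴. -/
open Finset intervalIntegral MeasureTheory Complex

noncomputable def ee (m : ℤ) (α : ℝ) : ℂ := Complex.exp (2 * Real.pi * Complex.I * α * m)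

lemma ee_eq (m : ℤ) : ee m = fun y : ℝ => Complex.exp ((2 * Real.pi * Complex.I * m) * y) := by
  funext y; unfold ee; congr 1; push_cast; ring

lemma ee_cont (m : ℤ) : Continuous (ee m) := by
  rw [ee_eq]
  exact Complex.continuous_exp.comp (continuous_const.mul Complex.continuous_ofReal)

lemma hasDerivAt_ee (m : ℤ) (α : ℝ) :
    HasDerivAt (ee m) ((2 * Real.pi * Complex.I * m) * ee m α) α := by
  rw [ee_eq]
  simpa [mul_comm] using
    (((hasDerivAt_id (α : ℂ)).const_mul (2 * Real.pi * Complex.I * m)).cexp).comp_ofReal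

lemma ee_add (m n : ℤ) (α : ℝ) : ee m α * ee n α = ee (m + n) α := by
  unfold ee; rw [← Complex.exp_add]; congr 1; push_cast; ring

lemma ee_conj (m : ℤ) (α : ℝ) : (starRingEnd ℂ) (ee m α) = ee (-m) α := by
  unfold ee; rw [← Complex.exp_conj]; congr 1
  simp only [map_mul, Complex.conj_I, map_ofNat, Complex.conj_ofReal, map_intCast]
  push_cast; ring

lemma ee_periodic (m : ℤ) : Function.Periodic (ee m) 1 := by
  intro α
  unfold ee
  have h : (2 * (Real.pi:ℂ) * Complex.I * ((α:ℝ)+1:ℝ) * m) =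
      2 * (Real.pi:ℂ) * Complex.I * (α:ℝ) * m + m * (2 * Real.pi * Complex.I) := by
    push_cast; ring
  rw [h, Complex.exp_add, Complex.exp_int_mul_two_pi_mul_I, mul_one]

lemma int_ee (m : ℤ) : ∫ α in (0:ℝ)..1, ee m α = if m = 0 then 1 else 0 := by
  by_cases hm : m = 0
  · simp [hm, ee]
  · have hc : (2 * (Real.pi:ℂ) * Complex.I * m) ≠ 0 := by
      simp [Real.pi_ne_zero, Complex.I_ne_zero, hm]
    rw [ee_eq, integral_exp_mul_complex hc]
    have h1 : (2 * (Real.pi:ℂ) * Complex.I * m) * (1:ℝ) = m * (2 * Real.pi * Complex.I) := by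
      push_cast; ring
    rw [h1, Complex.exp_int_mul_two_pi_mul_I]
    simp [hm]

lemma int_sum {ι : Type*} (T : Finset ι) (m : ι → ℤ) (w : ι → ℂ) :
    ∫ α in (0:ℝ)..1, (∑ i ∈ T, w i * ee (m i) α) =
      ∑ i ∈ T.filter (fun i => m i = 0), w i := by
  rw [intervalIntegral.integral_finset_sum]
  · rw [Finset.sum_filter]
    refine Finset.sum_congr rfl fun i _ => ?_
    rw [intervalIntegral.integral_const_mul, int_ee]
    by_cases h : m i = 0 <;> simp [h]
  · exact fun i _ => (continuous_const.mul (ee_cont (m i))).intervalIntegrable 0 1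


noncomputable def hh (S : Finset ℤ) (α : ℝ) : ℂ := ∑ m ∈ S, ee m α
noncomputable def PP (S : Finset ℤ) (α : ℝ) : ℂ := ∑ p ∈ S ×ˢ S, ee (p.1 - p.2) α
noncomputable def QQ (S : Finset ℤ) (α : ℝ) : ℂ :=
  ∑ p ∈ S ×ˢ S, (2 * Real.pi * Complex.I * ((p.1 - p.2 : ℤ) : ℂ)) * ee (p.1 - p.2) α

lemma PP_eq (S : Finset ℤ) (α : ℝ) : PP S α = (Complex.normSq (hh S α) : ℂ) := by
  rw [← Complex.mul_conj, hh, map_sum]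
  rw [Finset.sum_mul_sum, PP, Finset.sum_product]
  refine Finset.sum_congr rfl fun a _ => Finset.sum_congr rfl fun b _ => ?_
  rw [ee_conj, ee_add, sub_eq_add_neg]

lemma QQ_conj (S : Finset ℤ) (α : ℝ) : (starRingEnd ℂ) (QQ S α) = QQ S α := by
  rw [QQ, map_sum, Finset.sum_product, Finset.sum_comm, ← Finset.sum_product']
  refine Finset.sum_congr rfl fun p _ => ?_
  simp only [map_mul, Complex.conj_I, map_ofNat, Complex.conj_ofReal, map_intCast]
  rw [ee_conj]
  have h : -(p.2 - p.1 : ℤ) = p.1 - p.2 := by ring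
  rw [h]
  push_cast
  ring

lemma QQ_im (S : Finset ℤ) (α : ℝ) : (QQ S α).im = 0 :=
  Complex.conj_eq_iff_im.mp (QQ_conj S α)

lemma HasDerivAt.creal {f : ℝ → ℂ} {f' : ℂ} {x : ℝ} (h : HasDerivAt f f' x) :
    HasDerivAt (fun y => (f y).re) f'.re x := by
  exact Complex.reCLM.hasFDerivAt.comp_hasDerivAt x h

noncomputable def gg (S : Finset ℤ) (α : ℝ) : ℝ := (PP S α).re
noncomputable def gg' (S : Finset ℤ) (α : ℝ) : ℝ := (QQ S α).re

lemma gg_eq (S : Finset ℤ) (α : ℝ) : gg S α = Complex.normSq (hh S α) := by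
  rw [gg, PP_eq, Complex.ofReal_re]

lemma gg_nonneg (S : Finset ℤ) (α : ℝ) : 0 ≤ gg S α := by
  rw [gg_eq]; exact Complex.normSq_nonneg _

lemma hasDerivAt_PP (S : Finset ℤ) (α : ℝ) : HasDerivAt (PP S) (QQ S α) α := by
  unfold PP QQ
  exact HasDerivAt.fun_sum fun p _ => hasDerivAt_ee _ α

lemma hasDerivAt_gg (S : Finset ℤ) (α : ℝ) : HasDerivAt (gg S) (gg' S α) α :=
  (hasDerivAt_PP S α).creal

lemma PP_cont (S : Finset ℤ) : Continuous (PP S) :=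
  continuous_finset_sum _ fun p _ => ee_cont _

lemma QQ_cont (S : Finset ℤ) : Continuous (QQ S) :=
  continuous_finset_sum _ fun p _ => continuous_const.mul (ee_cont _)

lemma gg_cont (S : Finset ℤ) : Continuous (gg S) := Complex.continuous_re.comp (PP_cont S)
lemma gg'_cont (S : Finset ℤ) : Continuous (gg' S) := Complex.continuous_re.comp (QQ_cont S)

lemma PP_per (S : Finset ℤ) : Function.Periodic (PP S) 1 := by
  intro α; unfold PP; exact Finset.sum_congr rfl fun p _ => ee_periodic _ α

lemma QQ_per (S : Finset ℤ) : Function.Periodic (QQ S) 1 := by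
  intro α; unfold QQ
  exact Finset.sum_congr rfl fun p _ => by rw [ee_periodic _ α]

lemma gg_per (S : Finset ℤ) : Function.Periodic (gg S) 1 := fun α => by rw [gg, PP_per, ← gg]
lemma gg'_per (S : Finset ℤ) : Function.Periodic (gg' S) 1 := fun α => by rw [gg', QQ_per, ← gg']

-- real part commutes with interval integral of continuous functions
lemma integral_re' {f : ℝ → ℂ} (hf : Continuous f) {a b : ℝ} (hab : a ≤ b) :
    ∫ x in a..b, (f x).re = (∫ x in a..b, f x).re := by
  rw [intervalIntegral.integral_of_le hab, intervalIntegral.integral_of_le hab]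
  exact integral_re hf.integrableOn_Ioc

-- squared sums as indexed sums
lemma PP_sq (S : Finset ℤ) (α : ℝ) :
    (PP S α) ^ 2 = ∑ pq ∈ (S ×ˢ S) ×ˢ (S ×ˢ S),
      (1:ℂ) * ee ((pq.1.1 - pq.1.2) + (pq.2.1 - pq.2.2)) α := by
  rw [sq, PP, Finset.sum_mul_sum, ← Finset.sum_product']
  exact Finset.sum_congr rfl fun pq _ => by rw [ee_add, one_mul]

lemma QQ_sq (S : Finset ℤ) (α : ℝ) :
    (QQ S α) ^ 2 = ∑ pq ∈ (S ×ˢ S) ×ˢ (S ×ˢ S),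
      ((2 * Real.pi * Complex.I * ((pq.1.1 - pq.1.2 : ℤ) : ℂ)) * (2 * Real.pi * Complex.I * ((pq.2.1 - pq.2.2 : ℤ) : ℂ)))
        * ee ((pq.1.1 - pq.1.2) + (pq.2.1 - pq.2.2)) α := by
  rw [sq, QQ, Finset.sum_mul_sum, ← Finset.sum_product']
  refine Finset.sum_congr rfl fun pq _ => ?_
  rw [mul_mul_mul_comm, ee_add]

lemma int_gg_sq (S : Finset ℤ) :
    ∫ α in (0:ℝ)..1, (gg S α) ^ 2 =
      (((S ×ˢ S) ×ˢ (S ×ˢ S)).filter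
        (fun pq => (pq.1.1 - pq.1.2) + (pq.2.1 - pq.2.2) = 0)).card := by
  have h1 : ∀ α : ℝ, (gg S α) ^ 2 = ((PP S α ^ 2)).re := by
    intro α
    rw [gg, sq, sq, Complex.mul_re, PP_eq]
    simp
  simp_rw [h1]
  rw [integral_re' (f := fun x => PP S x ^ 2) ((PP_cont S).pow 2) zero_le_one]
  have := int_sum ((S ×ˢ S) ×ˢ (S ×ˢ S))
    (fun pq => (pq.1.1 - pq.1.2) + (pq.2.1 - pq.2.2)) (fun _ => (1:ℂ))
  simp_rw [← PP_sq] at this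
  rw [this]
  simp

lemma int_gg'_sq (S : Finset ℤ) :
    ∫ α in (0:ℝ)..1, (gg' S α) ^ 2 =
      (∑ pq ∈ ((S ×ˢ S) ×ˢ (S ×ˢ S)).filter
        (fun pq => (pq.1.1 - pq.1.2) + (pq.2.1 - pq.2.2) = 0),
        ((2 * Real.pi * Complex.I * ((pq.1.1 - pq.1.2 : ℤ) : ℂ)) *
         (2 * Real.pi * Complex.I * ((pq.2.1 - pq.2.2 : ℤ) : ℂ)))).re := by
  have h1 : ∀ α : ℝ, (gg' S α) ^ 2 = ((QQ S α ^ 2)).re := by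
    intro α
    rw [gg', sq, sq, Complex.mul_re, QQ_im]
    ring
  simp_rw [h1]
  rw [integral_re' (f := fun x => QQ S x ^ 2) ((QQ_cont S).pow 2) zero_le_one]
  have := int_sum ((S ×ˢ S) ×ˢ (S ×ˢ S))
    (fun pq => (pq.1.1 - pq.1.2) + (pq.2.1 - pq.2.2))
    (fun pq => ((2 * Real.pi * Complex.I * ((pq.1.1 - pq.1.2 : ℤ) : ℂ)) *
         (2 * Real.pi * Complex.I * ((pq.2.1 - pq.2.2 : ℤ) : ℂ))))
  simp_rw [← QQ_sq] at this
  rw [this]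

-- Gallagher pointwise lemma
lemma gallagher {G G' : ℝ → ℝ} (hd : ∀ x, HasDerivAt G (G' x) x) (hc : Continuous G)
    (hc' : Continuous G') {x δ : ℝ} (hδ : 0 < δ) :
    G x ≤ δ⁻¹ * (∫ y in x..x+δ, G y) + ∫ y in x..x+δ, |G' y| := by
  set K := ∫ y in x..x+δ, |G' y| with hK
  have key : ∀ y ∈ Set.Icc x (x+δ), G x ≤ G y + K := by
    intro y hy
    have h1 : ∫ t in x..y, G' t = G y - G x :=
      intervalIntegral.integral_eq_sub_of_hasDerivAt (fun t _ => hd t)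
        (hc'.intervalIntegrable x y)
    have h2 : |∫ t in x..y, G' t| ≤ ∫ t in x..y, |G' t| :=
      intervalIntegral.abs_integral_le_integral_abs hy.1
    have h3 : ∫ t in x..y, |G' t| ≤ K := by
      rw [hK, ← intervalIntegral.integral_add_adjacent_intervals
        ((hc'.abs).intervalIntegrable x y) ((hc'.abs).intervalIntegrable y (x+δ))]
      have : 0 ≤ ∫ t in y..(x+δ), |G' t| :=
        intervalIntegral.integral_nonneg hy.2 (fun t _ => abs_nonneg _)
      linarith
    have h4 : G x - G y ≤ |∫ t in x..y, G' t| := by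
      rw [h1, abs_sub_comm (G y) (G x)]
      exact le_abs_self _
    linarith
  have hint : ∫ y in x..x+δ, G x ≤ ∫ y in x..x+δ, (G y + K) := by
    apply intervalIntegral.integral_mono_on (by linarith)
      (intervalIntegrable_const) ((hc.intervalIntegrable _ _).add intervalIntegrable_const) key
  rw [intervalIntegral.integral_const, intervalIntegral.integral_add
    (hc.intervalIntegrable _ _) intervalIntegrable_const, intervalIntegral.integral_const] at hint
  simp only [add_sub_cancel_left, smul_eq_mul] at hint
  have : δ * G x ≤ (∫ y in x..x+δ, G y) + δ * K := by linarith
  calc G x = δ⁻¹ * (δ * G x) := by field_simp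
  _ ≤ δ⁻¹ * ((∫ y in x..x+δ, G y) + δ * K) := by
      apply mul_le_mul_of_nonneg_left this (by positivity)
  _ = δ⁻¹ * (∫ y in x..x+δ, G y) + K := by field_simp

-- sum of integrals over disjoint intervals inside (0,2]
lemma disjoint_sum {R : ℕ} {f : ℝ → ℝ} (hf : Continuous f) (hf0 : ∀ x, 0 ≤ f x)
    {β : Fin R → ℝ} {δ : ℝ} (hδ : 0 < δ)
    (hsub : ∀ i, Set.Ioc (β i) (β i + δ) ⊆ Set.Ioc (0:ℝ) 2)
    (hdisj : ∀ i j, i ≠ j → Disjoint (Set.Ioc (β i) (β i + δ)) (Set.Ioc (β j) (β j + δ))) :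
    ∑ i : Fin R, ∫ y in (β i)..(β i + δ), f y ≤ ∫ y in (0:ℝ)..2, f y := by
  have h1 : ∀ i : Fin R, ∫ y in (β i)..(β i + δ), f y = ∫ y in Set.Ioc (β i) (β i + δ), f y :=
    fun i => intervalIntegral.integral_of_le (by linarith)
  simp_rw [h1]
  rw [intervalIntegral.integral_of_le (by norm_num : (0:ℝ) ≤ 2)]
  rw [← MeasureTheory.integral_biUnion_finset Finset.univ
    (fun i _ => measurableSet_Ioc)
    (fun i _ j _ hij => hdisj i j hij)
    (fun i _ => hf.integrableOn_Ioc)]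
  apply MeasureTheory.setIntegral_mono_set (hf.integrableOn_Ioc)
  · exact Filter.Eventually.of_forall (fun x => hf0 x)
  · apply HasSubset.Subset.eventuallyLE
    exact Set.iUnion₂_subset fun i _ => hsub i

-- quadruple count bijection
lemma card_quad (S : Finset ℤ) :
    (((S ×ˢ S) ×ˢ (S ×ˢ S)).filter
        (fun pq => (pq.1.1 - pq.1.2) + (pq.2.1 - pq.2.2) = 0)).card =
    ((S ×ˢ S ×ˢ S ×ˢ S).filter
        (fun p => p.1 - p.2.1 = p.2.2.1 - p.2.2.2)).card := by
  refine Finset.card_bij' (fun pq _ => (pq.1.1, pq.1.2, pq.2.2, pq.2.1))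
    (fun p _ => ((p.1, p.2.1), (p.2.2.2, p.2.2.1))) ?_ ?_ (fun _ _ => rfl) (fun _ _ => rfl)
  · intro pq h
    simp only [Finset.mem_filter, Finset.mem_product] at h ⊢
    refine ⟨⟨h.1.1.1, h.1.1.2, h.1.2.2, h.1.2.1⟩, by omega⟩
  · intro p h
    simp only [Finset.mem_filter, Finset.mem_product] at h ⊢
    refine ⟨⟨⟨h.1.1, h.1.2.1⟩, h.1.2.2.2, h.1.2.2.1⟩, by omega⟩


lemma hh_abs (S : Finset ℤ) (αi : ℝ) :
    ‖∑ m ∈ S, Complex.exp (2 * Real.pi * Complex.I * αi * m)‖ =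
    ‖hh S αi‖ := rfl

set_option maxHeartbeats 1600000 in
theorem large_spectrum_bound :
    ∃ C : ℝ, 0 < C ∧ ∀ (N : ℕ), 1 ≤ N → ∀ S : Finset ℤ, S.Nonempty →
      S ⊆ Finset.Icc 1 (N : ℤ) → ∀ ε η : ℝ, 0 < ε → η ≤ 1 →
      ((((S ×ˢ S ×ˢ S ×ˢ S).filter
          (fun p => p.1 - p.2.1 = p.2.2.1 - p.2.2.2)).card : ℝ)) ≤ (2 + η) * S.card ^ 2 →
      ∀ (R : ℕ) (α : Fin R → ℝ),
        (∀ i j, i ≠ j → 1 / (N : ℝ) ≤ |(α i - α j) - round (α i - α j)|) →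
        (∀ i, ε * S.card ≤
          ‖∑ m ∈ S, Complex.exp (2 * Real.pi * Complex.I * (α i) * m)‖) →
        (R : ℝ) ≤ C * N / (ε ^ 4 * S.card ^ 2) ∧
        ∀ δ : ℝ, 0 < δ → δ * Real.sqrt N ≤ S.card → (R : ℝ) ≤ C / (δ ^ 2 * ε ^ 4) := by
  refine ⟨90, by norm_num, ?_⟩
  intro N hN S hSne hS ε η hε hη hE R α hsep hlb
  set Nr : ℝ := (N : ℝ) with hNr
  have hNr1 : (1:ℝ) ≤ Nr := by simp only [hNr]; exact_mod_cast hN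
  have hNrpos : (0:ℝ) < Nr := by linarith
  set sN : ℝ := (S.card : ℝ) with hsN
  have hsN1 : (1:ℝ) ≤ sN := by
    have h := Finset.card_pos.mpr hSne
    simp only [hsN]
    exact_mod_cast h
  have hsNpos : (0:ℝ) < sN := by linarith
  set Er : ℝ := (((S ×ˢ S ×ˢ S ×ˢ S).filter
      (fun p => p.1 - p.2.1 = p.2.2.1 - p.2.2.2)).card : ℝ) with hEr
  have hErnn : 0 ≤ Er := Nat.cast_nonneg _
  have hEr3 : Er ≤ 3 * sN ^ 2 := by nlinarith
  -- the function G = g^2 and its derivative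
  set G : ℝ → ℝ := fun x => gg S x ^ 2 with hG
  set G' : ℝ → ℝ := fun x => 2 * gg S x * gg' S x with hG'
  have hd : ∀ x, HasDerivAt G (G' x) x := by
    intro x
    have := (hasDerivAt_gg S x).fun_pow 2
    simpa [hG, hG', mul_comm, mul_assoc, mul_left_comm] using this
  have hGc : Continuous G := (gg_cont S).pow 2
  have hG'c : Continuous G' := (continuous_const.mul (gg_cont S)).mul (gg'_cont S)
  have hGper : Function.Periodic G 1 := fun x => by simp only [hG, gg_per S x]
  have hG'per : Function.Periodic G' 1 := fun x => by
    simp only [hG', gg_per S x, gg'_per S x]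
  -- fractional parts and separation
  set β : Fin R → ℝ := fun i => Int.fract (α i) with hβ
  set δ : ℝ := 1 / (2 * Nr) with hδdef
  have hδpos : 0 < δ := by positivity
  have hδhalf : δ ≤ 1 / 2 := by
    rw [hδdef]
    rw [div_le_div_iff₀ (by linarith) (by norm_num)]
    linarith
  have hsep' : ∀ i j, i ≠ j → 2 * δ ≤ |β i - β j| := by
    intro i j hij
    have h1 := hsep i j hij
    set s : ℝ := β i - β j with hs
    have hs_eq : s = (α i - α j) - (⌊α i⌋ - ⌊α j⌋ : ℤ) := by
      simp only [hs, hβ, Int.fract]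
      push_cast
      ring
    have hround : |s - round s| = |(α i - α j) - round (α i - α j)| := by
      rw [hs_eq, round_sub_intCast]
      push_cast
      ring_nf
    have h2 : 1 / Nr ≤ |s - round s| := by rw [hround]; exact h1
    have h2δ : 2 * δ = 1 / Nr := by rw [hδdef]; ring
    rw [h2δ]
    by_contra hcon
    push_neg at hcon
    rcases le_or_gt (2:ℝ) Nr with hN2 | hN2
    · have hhalf : 1 / Nr ≤ 1 / 2 := by
        rw [div_le_div_iff₀ (by linarith) (by norm_num)]; linarith
      have habs : |s| < 1 / 2 := lt_of_lt_of_le hcon hhalf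
      have hr0 : round s = 0 := by
        rw [round_eq_zero_iff]
        constructor
        · linarith [neg_abs_le s]
        · linarith [le_abs_self s]
      rw [hr0] at h2
      simp only [Int.cast_zero, sub_zero] at h2
      rw [one_div] at hcon h2
      linarith
    · -- N = 1 case : 1/Nr ≥ 1/2 can't be ≤ |s - round s| ≤ 1/2? careful
      have : Nr = 1 := by
        have : N = 1 := by
          have : (N:ℝ) < 2 := hN2
          have hNlt : N < 2 := by exact_mod_cast this
          omega
        rw [hNr, this]; norm_num
      rw [this] at h2
      have := abs_sub_round s
      norm_num at h2
      linarith
  have hβ0 : ∀ i, 0 ≤ β i := fun i => Int.fract_nonneg _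
  have hβ1 : ∀ i, β i < 1 := fun i => Int.fract_lt_one _
  have hsub : ∀ i, Set.Ioc (β i) (β i + δ) ⊆ Set.Ioc (0:ℝ) 2 := by
    intro i x hx
    constructor
    · linarith [hx.1, hβ0 i]
    · linarith [hx.2, hβ1 i, hδhalf]
  have hdisj : ∀ i j, i ≠ j →
      Disjoint (Set.Ioc (β i) (β i + δ)) (Set.Ioc (β j) (β j + δ)) := by
    intro i j hij
    rw [Set.disjoint_left]
    intro x hxi hxj
    have h := hsep' i j hij
    rcases abs_cases (β i - β j) with ⟨he, _⟩ | ⟨he, _⟩ <;>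
      [skip; skip] <;>
      · rw [he] at h
        have := hxi.1; have := hxi.2; have := hxj.1; have := hxj.2
        linarith
  -- pointwise lower bound
  have hlow : ∀ i, ε ^ 4 * sN ^ 4 ≤ G (α i) := by
    intro i
    have h1 : ε * sN ≤ ‖hh S (α i)‖ := by
      rw [← hh_abs]; exact hlb i
    have h2 : (ε * sN) ^ 2 ≤ gg S (α i) := by
      rw [gg_eq, ← Complex.sq_norm]
      apply pow_le_pow_left₀ (by positivity) h1
    have h3 : ((ε * sN) ^ 2) ^ 2 ≤ (gg S (α i)) ^ 2 :=
      pow_le_pow_left₀ (by positivity) h2 2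
    calc ε ^ 4 * sN ^ 4 = ((ε * sN) ^ 2) ^ 2 := by ring
    _ ≤ (gg S (α i)) ^ 2 := h3
    _ = G (α i) := rfl
  -- periodicity : G (β i) = G (α i)
  have hβG : ∀ i, G (β i) = G (α i) := by
    intro i
    have : β i = α i - (⌊α i⌋ : ℤ) * 1 := by
      simp only [hβ, Int.fract]; push_cast; ring
    rw [this, hGper.sub_int_mul_eq]
  -- main chain
  have hcount : (R : ℝ) * (ε ^ 4 * sN ^ 4) ≤ ∑ i : Fin R, G (α i) := by
    have := Finset.card_nsmul_le_sum Finset.univ (fun i => G (α i)) (ε ^ 4 * sN ^ 4)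
      (fun i _ => hlow i)
    simpa [nsmul_eq_mul, mul_comm] using this
  have hgal : ∑ i : Fin R, G (α i) ≤
      δ⁻¹ * (∑ i : Fin R, ∫ y in (β i)..(β i + δ), G y) +
      ∑ i : Fin R, ∫ y in (β i)..(β i + δ), |G' y| := by
    rw [Finset.mul_sum, ← Finset.sum_add_distrib]
    apply Finset.sum_le_sum
    intro i _
    rw [← hβG i]
    exact gallagher hd hGc hG'c hδpos
  have habs0 : ∀ x, 0 ≤ |G' x| := fun x => abs_nonneg _
  have hG0 : ∀ x, 0 ≤ G x := fun x => sq_nonneg _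
  have hsum1 : ∑ i : Fin R, ∫ y in (β i)..(β i + δ), G y ≤ ∫ y in (0:ℝ)..2, G y :=
    disjoint_sum hGc hG0 hδpos hsub hdisj
  have hsum2 : ∑ i : Fin R, ∫ y in (β i)..(β i + δ), |G' y| ≤ ∫ y in (0:ℝ)..2, |G' y| :=
    disjoint_sum (hG'c.abs) habs0 hδpos hsub hdisj
  -- integrals over [0,2] = 2 * integral over [0,1]
  have hdouble : ∀ (f : ℝ → ℝ), Continuous f → Function.Periodic f 1 →
      ∫ y in (0:ℝ)..2, f y = 2 * ∫ y in (0:ℝ)..1, f y := by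
    intro f hfc hfper
    have : ∫ y in (0:ℝ)..2, f y = (∫ y in (0:ℝ)..1, f y) + ∫ y in (1:ℝ)..2, f y := by
      rw [intervalIntegral.integral_add_adjacent_intervals
        (hfc.intervalIntegrable _ _) (hfc.intervalIntegrable _ _)]
    rw [this]
    have h12 : ∫ y in (1:ℝ)..2, f y = ∫ y in (0:ℝ)..1, f y := by
      have := hfper.intervalIntegral_add_eq 1 0
      norm_num at this
      convert this using 2 <;> norm_num
    rw [h12]; ring
  set E2 : ℝ := ((((S ×ˢ S) ×ˢ (S ×ˢ S)).filter
      (fun pq => (pq.1.1 - pq.1.2) + (pq.2.1 - pq.2.2) = 0)).card : ℝ) with hE2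
  have hE2Er : E2 = Er := by rw [hE2, hEr, card_quad]
  have hintG : ∫ y in (0:ℝ)..1, G y = Er := by
    rw [← hE2Er, hE2]
    exact int_gg_sq S
  -- bound on ∫ g'^2
  have habs_le : ∀ a b : ℤ, a ∈ S → b ∈ S → |(a - b : ℝ)| ≤ Nr := by
    intro a b ha hb
    have ha' := hS ha
    have hb' := hS hb
    rw [Finset.mem_Icc] at ha' hb'
    rw [hNr, abs_le]
    have h1 : (1:ℝ) ≤ (a:ℝ) := by exact_mod_cast ha'.1
    have h2 : (b:ℝ) ≤ (N:ℝ) := by exact_mod_cast hb'.2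
    have h3 : (a:ℝ) ≤ (N:ℝ) := by exact_mod_cast ha'.2
    have h4 : (1:ℝ) ≤ (b:ℝ) := by exact_mod_cast hb'.1
    constructor <;> [push_cast; push_cast] <;> linarith
  have hintg'sq : ∫ y in (0:ℝ)..1, (gg' S y) ^ 2 ≤ 4 * Real.pi ^ 2 * Nr ^ 2 * Er := by
    rw [int_gg'_sq S]
    rw [Complex.re_sum]
    have hterm : ∀ pq ∈ ((S ×ˢ S) ×ˢ (S ×ˢ S)).filter
        (fun pq => (pq.1.1 - pq.1.2) + (pq.2.1 - pq.2.2) = 0),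
        ((2 * Real.pi * Complex.I * ((pq.1.1 - pq.1.2 : ℤ) : ℂ)) *
         (2 * Real.pi * Complex.I * ((pq.2.1 - pq.2.2 : ℤ) : ℂ))).re ≤
        4 * Real.pi ^ 2 * Nr ^ 2 := by
      intro pq hpq
      rw [Finset.mem_filter, Finset.mem_product] at hpq
      obtain ⟨⟨h1, h2⟩, _⟩ := hpq
      rw [Finset.mem_product] at h1 h2
      refine le_trans (Complex.re_le_norm _) ?_
      rw [norm_mul]
      have hb1 : ‖(2 * Real.pi * Complex.I * ((pq.1.1 - pq.1.2 : ℤ) : ℂ))‖ ≤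
          2 * Real.pi * Nr := by
        rw [norm_mul, norm_mul, norm_mul]
        simp only [Complex.norm_ofNat, Complex.norm_I, mul_one, Complex.norm_intCast]
        rw [Complex.norm_real, Real.norm_eq_abs, abs_of_pos Real.pi_pos]
        have := habs_le _ _ h1.1 h1.2
        push_cast at this ⊢
        nlinarith [Real.pi_pos]
      have hb2 : ‖(2 * Real.pi * Complex.I * ((pq.2.1 - pq.2.2 : ℤ) : ℂ))‖ ≤
          2 * Real.pi * Nr := by
        rw [norm_mul, norm_mul, norm_mul]
        simp only [Complex.norm_ofNat, Complex.norm_I, mul_one, Complex.norm_intCast]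
        rw [Complex.norm_real, Real.norm_eq_abs, abs_of_pos Real.pi_pos]
        have := habs_le _ _ h2.1 h2.2
        push_cast at this ⊢
        nlinarith [Real.pi_pos]
      calc ‖_‖ * ‖_‖ ≤ (2 * Real.pi * Nr) * (2 * Real.pi * Nr) := by
            apply mul_le_mul hb1 hb2 (norm_nonneg _) (by positivity)
      _ = 4 * Real.pi ^ 2 * Nr ^ 2 := by ring
    calc _ ≤ ∑ _pq ∈ ((S ×ˢ S) ×ˢ (S ×ˢ S)).filter
          (fun pq => (pq.1.1 - pq.1.2) + (pq.2.1 - pq.2.2) = 0),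
          (4 * Real.pi ^ 2 * Nr ^ 2) := Finset.sum_le_sum hterm
    _ = E2 * (4 * Real.pi ^ 2 * Nr ^ 2) := by rw [Finset.sum_const, hE2]; simp [nsmul_eq_mul]
    _ = 4 * Real.pi ^ 2 * Nr ^ 2 * Er := by rw [hE2Er]; ring
  -- pointwise AM-GM bound for |G'|
  set c : ℝ := 2 * Real.pi * Nr with hc
  have hcpos : 0 < c := by positivity
  have hptwise : ∀ x, |G' x| ≤ c * (gg S x) ^ 2 + c⁻¹ * (gg' S x) ^ 2 := by
    intro x
    have hg := gg_nonneg S x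
    have h1 : |G' x| = 2 * gg S x * |gg' S x| := by
      rw [hG']
      rw [abs_mul, abs_mul]
      rw [_root_.abs_of_nonneg hg]
      norm_num
    rw [h1]
    have hcd : c * c⁻¹ = 1 := mul_inv_cancel₀ (ne_of_gt hcpos)
    nlinarith [sq_nonneg (c * gg S x - |gg' S x|), _root_.sq_abs (gg' S x),
      mul_pos hcpos (mul_pos hcpos (inv_pos.mpr hcpos)), inv_pos.mpr hcpos,
      mul_nonneg (mul_nonneg (le_of_lt (inv_pos.mpr hcpos)) hg) (_root_.abs_nonneg (gg' S x)),
      sq_nonneg (gg S x), mul_nonneg (le_of_lt hcpos) (sq_nonneg (gg S x))]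
  have hintabsG' : ∫ y in (0:ℝ)..1, |G' y| ≤ 4 * Real.pi * Nr * Er := by
    have step1 : ∫ y in (0:ℝ)..1, |G' y| ≤
        ∫ y in (0:ℝ)..1, (c * (gg S y) ^ 2 + c⁻¹ * (gg' S y) ^ 2) := by
      apply intervalIntegral.integral_mono_on zero_le_one
        (hG'c.abs.intervalIntegrable _ _)
        (((continuous_const.mul ((gg_cont S).pow 2)).add
          (continuous_const.mul ((gg'_cont S).pow 2))).intervalIntegrable _ _)
      intro x _
      exact hptwise x
    have step2 : ∫ y in (0:ℝ)..1, (c * (gg S y) ^ 2 + c⁻¹ * (gg' S y) ^ 2) =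
        c * (∫ y in (0:ℝ)..1, (gg S y) ^ 2) + c⁻¹ * ∫ y in (0:ℝ)..1, (gg' S y) ^ 2 := by
      rw [intervalIntegral.integral_add (f := fun y => c * (gg S y) ^ 2) (g := fun y => c⁻¹ * (gg' S y) ^ 2)
        ((continuous_const.mul ((gg_cont S).pow 2)).intervalIntegrable _ _)
        ((continuous_const.mul ((gg'_cont S).pow 2)).intervalIntegrable _ _),
        intervalIntegral.integral_const_mul, intervalIntegral.integral_const_mul]
    have hintggsq : ∫ y in (0:ℝ)..1, (gg S y) ^ 2 = Er := by
      rw [← hE2Er, hE2]; exact int_gg_sq S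
    have step3 : c * (∫ y in (0:ℝ)..1, (gg S y) ^ 2) + c⁻¹ * ∫ y in (0:ℝ)..1, (gg' S y) ^ 2 ≤
        c * Er + c⁻¹ * (4 * Real.pi ^ 2 * Nr ^ 2 * Er) := by
      rw [hintggsq]
      have := mul_le_mul_of_nonneg_left hintg'sq (le_of_lt (inv_pos.mpr hcpos))
      linarith
    have step4 : c * Er + c⁻¹ * (4 * Real.pi ^ 2 * Nr ^ 2 * Er) = 4 * Real.pi * Nr * Er := by
      rw [hc]
      field_simp
      ring
    linarith
  -- assemble
  have hmain : (R : ℝ) * (ε ^ 4 * sN ^ 4) ≤ 90 * (Nr * sN ^ 2) := by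
    have c1 : ∑ i : Fin R, G (α i) ≤ δ⁻¹ * (2 * Er) + 2 * (4 * Real.pi * Nr * Er) := by
      have d1 : ∫ y in (0:ℝ)..2, G y = 2 * Er := by
        rw [hdouble G hGc hGper, hintG]
      have d2 : ∫ y in (0:ℝ)..2, |G' y| ≤ 2 * (4 * Real.pi * Nr * Er) := by
        rw [hdouble (fun y => |G' y|) hG'c.abs (fun x => by simp only [hG'per x])]
        linarith
      have := hgal
      have h5 : δ⁻¹ * (∑ i : Fin R, ∫ y in (β i)..(β i + δ), G y) ≤ δ⁻¹ * (2 * Er) := by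
        rw [← d1]
        exact mul_le_mul_of_nonneg_left hsum1 (le_of_lt (inv_pos.mpr hδpos))
      linarith
    have hδinv : δ⁻¹ = 2 * Nr := by rw [hδdef]; field_simp
    rw [hδinv] at c1
    have hpi : Real.pi ≤ 3.15 := le_of_lt Real.pi_lt_d2
    have c2 : (2 * Nr) * (2 * Er) + 2 * (4 * Real.pi * Nr * Er) ≤ 30 * Nr * Er := by
      nlinarith [mul_nonneg (le_of_lt hNrpos) hErnn]
    have c3 : 30 * Nr * Er ≤ 90 * (Nr * sN ^ 2) := by nlinarith
    linarith [hcount]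
  constructor
  · rw [le_div_iff₀ (by positivity : (0:ℝ) < ε ^ 4 * sN ^ 2)]
    have hs2 : (0:ℝ) < sN ^ 2 := by positivity
    rw [← mul_le_mul_iff_left₀ hs2]
    calc (R:ℝ) * (ε ^ 4 * sN ^ 2) * sN ^ 2 = (R:ℝ) * (ε ^ 4 * sN ^ 4) := by ring
    _ ≤ 90 * (Nr * sN ^ 2) := hmain
    _ = 90 * Nr * sN ^ 2 := by ring
  · intro d hd0 hdN
    have hNsq : d ^ 2 * Nr ≤ sN ^ 2 := by
      have h1 : (d * Real.sqrt Nr) ^ 2 ≤ sN ^ 2 := by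
        apply pow_le_pow_left₀ (by positivity) hdN
      rw [mul_pow, Real.sq_sqrt (le_of_lt hNrpos)] at h1
      exact h1
    have hfirst : (R : ℝ) * (ε ^ 4 * sN ^ 2) ≤ 90 * Nr := by
      have hs2 : (0:ℝ) < sN ^ 2 := by positivity
      rw [← mul_le_mul_iff_left₀ hs2]
      calc (R:ℝ) * (ε ^ 4 * sN ^ 2) * sN ^ 2 = (R:ℝ) * (ε ^ 4 * sN ^ 4) := by ring
      _ ≤ 90 * (Nr * sN ^ 2) := hmain
      _ = 90 * Nr * sN ^ 2 := by ring
    rw [le_div_iff₀ (by positivity : (0:ℝ) < d ^ 2 * ε ^ 4)]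
    have : (R : ℝ) * (d ^ 2 * ε ^ 4) * sN ^ 2 ≤ 90 * sN ^ 2 := by
      calc (R : ℝ) * (d ^ 2 * ε ^ 4) * sN ^ 2 = ((R:ℝ) * (ε ^ 4 * sN ^ 2)) * d ^ 2 := by ring
      _ ≤ (90 * Nr) * d ^ 2 := by
          apply mul_le_mul_of_nonneg_right hfirst (sq_nonneg d)
      _ = 90 * (d ^ 2 * Nr) := by ring
      _ ≤ 90 * sN ^ 2 := by linarith
    have hs2 : (0:ℝ) < sN ^ 2 := by positivity
    rw [← mul_le_mul_iff_left₀ hs2]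
    exact this
end

section
/- Let s ≥ 5, let a₁, ..., a_s be nonzero integers, η ≤ 1/2, and let S ⊆ {1, ..., N} satisfy E(S) ≤ (2 + η)|S|². Then the number of solutions (x₁, ..., x_s) ∈ S^s to a₁x₁ + ... + a_s x_s = 0 in which some two coordinates x_i, x_j (i ≠ j) are equal is O_s(N^{s/2 − 5/4}). -/
open Finset
open scoped Classical

lemma card_match {α β : Type*} (A : Finset α) (B : Finset β)
    (f : α → ℤ) (g : β → ℤ) (I : Finset ℤ) (hI : A.image f ⊆ I) :
    ((A ×ˢ B).filter fun p => f p.1 = g p.2).card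
      = ∑ d ∈ I, (A.filter fun x => f x = d).card * (B.filter fun y => g y = d).card := by
  rw [Finset.card_eq_sum_card_fiberwise (f := fun p => f p.1) (t := I)
    (fun p hp => hI (Finset.mem_image_of_mem _ (Finset.mem_product.1 (Finset.mem_filter.1 hp).1).1))]
  refine Finset.sum_congr rfl fun d _ => ?_
  rw [Finset.filter_filter]
  rw [← Finset.card_product]
  congr 1
  ext ⟨x, y⟩
  simp only [Finset.mem_filter, Finset.mem_product]
  constructor
  · rintro ⟨⟨hx, hy⟩, he, hd⟩; exact ⟨⟨hx, hd⟩, hy, hd ▸ he.symm⟩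
  · rintro ⟨⟨hx, hd⟩, hy, hd'⟩; exact ⟨⟨hx, hy⟩, hd.trans hd'.symm, hd⟩

lemma match_sq_le {α β : Type*} (A : Finset α) (B : Finset β) (f : α → ℤ) (g : β → ℤ) :
    ((((A ×ˢ B).filter fun p => f p.1 = g p.2).card : ℝ)) ^ 2 ≤
      ((((A ×ˢ A).filter fun p => f p.1 = f p.2).card : ℝ)) *
      ((((B ×ˢ B).filter fun p => g p.1 = g p.2).card : ℝ)) := by
  set I := A.image f ∪ B.image g with hI
  rw [card_match A B f g I (Finset.subset_union_left),
      card_match A A f f I (Finset.subset_union_left),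
      card_match B B g g I (Finset.subset_union_right)]
  push_cast
  have := Finset.sum_mul_sq_le_sq_mul_sq I (fun d => ((A.filter fun x => f x = d).card : ℝ))
    (fun d => ((B.filter fun y => g y = d).card : ℝ))
  calc (∑ d ∈ I, ((A.filter fun x => f x = d).card : ℝ) * ((B.filter fun y => g y = d).card : ℝ)) ^ 2
      ≤ (∑ d ∈ I, ((A.filter fun x => f x = d).card : ℝ) ^ 2) *
        (∑ d ∈ I, ((B.filter fun y => g y = d).card : ℝ) ^ 2) := this
    _ = _ := by simp [sq]

lemma diagCard {α : Type*} [DecidableEq α] (A : Finset α) :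
    ((A ×ˢ A).filter fun p => p.1 = p.2).card = A.card := by
  have hinj : Function.Injective (fun x : α => (x, x)) := fun a b h => congrArg Prod.fst h
  rw [← Finset.card_image_of_injective A hinj]
  congr 1
  ext ⟨x, y⟩
  simp only [Finset.mem_filter, Finset.mem_product, Finset.mem_image]
  constructor
  · rintro ⟨⟨hx, _⟩, rfl⟩; exact ⟨x, hx, rfl⟩
  · rintro ⟨z, hz, h⟩; cases h; exact ⟨⟨hz, hz⟩, rfl⟩

lemma size_bound (S : Finset ℤ) (N : ℕ) (hS : S ⊆ Finset.Icc 1 (N : ℤ)) :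
    ((S.card : ℝ)) ^ 4 ≤
      (((((S ×ˢ S) ×ˢ (S ×ˢ S)).filter fun p => p.1.1 - p.1.2 = p.2.1 - p.2.2).card : ℝ))
        * (2 * N + 1) := by
  set I : Finset ℤ := Finset.Icc (-(N:ℤ)) N with hIdef
  have hmem : ∀ p ∈ S ×ˢ S, (fun q : ℤ × ℤ => q.1 - q.2) p ∈ I := by
    rintro ⟨x, y⟩ hp
    obtain ⟨hx, hy⟩ := Finset.mem_product.1 hp
    have h1 := Finset.mem_Icc.1 (hS hx)
    have h2 := Finset.mem_Icc.1 (hS hy)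
    simp only [hIdef, Finset.mem_Icc]
    omega
  have h1 : (S ×ˢ S).card = ∑ d ∈ I, ((S ×ˢ S).filter fun p => p.1 - p.2 = d).card :=
    Finset.card_eq_sum_card_fiberwise hmem
  have h2 : (((S ×ˢ S) ×ˢ (S ×ˢ S)).filter fun p =>
        (fun q : ℤ × ℤ => q.1 - q.2) p.1 = (fun q : ℤ × ℤ => q.1 - q.2) p.2).card
      = ∑ d ∈ I, ((S ×ˢ S).filter fun p => p.1 - p.2 = d).card *
          ((S ×ˢ S).filter fun p => p.1 - p.2 = d).card :=
    card_match (S ×ˢ S) (S ×ˢ S) (fun q : ℤ × ℤ => q.1 - q.2) (fun q : ℤ × ℤ => q.1 - q.2) I (fun d hd => by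
      obtain ⟨p, hp, rfl⟩ := Finset.mem_image.1 hd
      exact hmem p hp)
  have hcardI : (I.card : ℝ) = 2 * N + 1 := by
    have hn : I.card = 2 * N + 1 := by rw [hIdef, Int.card_Icc]; omega
    rw [hn]; push_cast; ring
  have hCS := Finset.sum_mul_sq_le_sq_mul_sq I
    (fun d => (((S ×ˢ S).filter fun p => p.1 - p.2 = d).card : ℝ)) (fun _ => (1 : ℝ))
  have hsum1 : (((S ×ˢ S).card : ℝ)) = ∑ d ∈ I, (((S ×ˢ S).filter fun p => p.1 - p.2 = d).card : ℝ) := by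
    rw [h1]; push_cast; rfl
  have hsum2 : ((((S ×ˢ S) ×ˢ (S ×ˢ S)).filter fun p => p.1.1 - p.1.2 = p.2.1 - p.2.2).card : ℝ)
      = ∑ d ∈ I, (((S ×ˢ S).filter fun p => p.1 - p.2 = d).card : ℝ) ^ 2 := by
    rw [show (((S ×ˢ S) ×ˢ (S ×ˢ S)).filter fun p : (ℤ×ℤ)×(ℤ×ℤ) => p.1.1 - p.1.2 = p.2.1 - p.2.2)
        = (((S ×ˢ S) ×ˢ (S ×ˢ S)).filter fun p =>
          (fun q : ℤ × ℤ => q.1 - q.2) p.1 = (fun q : ℤ × ℤ => q.1 - q.2) p.2) from rfl, h2]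
    push_cast
    exact Finset.sum_congr rfl fun d _ => by ring
  have hfinal : (((S ×ˢ S).card : ℝ)) ^ 2 ≤
      ((((S ×ˢ S) ×ˢ (S ×ˢ S)).filter fun p => p.1.1 - p.1.2 = p.2.1 - p.2.2).card : ℝ) * (2 * N + 1) := by
    rw [hsum1, hsum2, ← hcardI]
    calc (∑ d ∈ I, (((S ×ˢ S).filter fun p => p.1 - p.2 = d).card : ℝ)) ^ 2
        = (∑ d ∈ I, (((S ×ˢ S).filter fun p => p.1 - p.2 = d).card : ℝ) * 1) ^ 2 := by simp
      _ ≤ (∑ d ∈ I, (((S ×ˢ S).filter fun p => p.1 - p.2 = d).card : ℝ) ^ 2) * (∑ d ∈ I, (1:ℝ)^2) := hCS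
      _ = (∑ d ∈ I, (((S ×ˢ S).filter fun p => p.1 - p.2 = d).card : ℝ) ^ 2) * I.card := by simp
  calc ((S.card : ℝ)) ^ 4 = (((S ×ˢ S).card : ℝ)) ^ 2 := by
        rw [Finset.card_product]; push_cast; ring
    _ ≤ _ := hfinal

lemma T_bound (S : Finset ℤ) (b₁ b₂ b₃ : ℤ) (hb₁ : b₁ ≠ 0) (hb₂ : b₂ ≠ 0) (hb₃ : b₃ ≠ 0) (n : ℤ) :
    ((((S ×ˢ (S ×ˢ S)).filter fun p => b₁ * p.1 = n - b₂ * p.2.1 - b₃ * p.2.2).card : ℝ)) ^ 2 ≤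
      (S.card : ℝ) *
      (((((S ×ˢ S) ×ˢ (S ×ˢ S)).filter fun p => p.1.1 - p.1.2 = p.2.1 - p.2.2).card : ℝ)) := by
  have h := match_sq_le S (S ×ˢ S) (fun x => b₁ * x) (fun q => n - b₂ * q.1 - b₃ * q.2)
  have hD : ((S ×ˢ S).filter fun p => b₁ * p.1 = b₁ * p.2) = (S ×ˢ S).filter fun p => p.1 = p.2 := by
    apply Finset.filter_congr
    intro p _
    exact mul_right_inj' hb₁
  -- reindex E''
  have hE : (((S ×ˢ S) ×ˢ (S ×ˢ S)).filter fun p =>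
        n - b₂ * p.1.1 - b₃ * p.1.2 = n - b₂ * p.2.1 - b₃ * p.2.2).card
      = (((S ×ˢ S) ×ˢ (S ×ˢ S)).filter fun q =>
        b₂ * (q.1.1 - q.1.2) = b₃ * (q.2.1 - q.2.2)).card := by
    refine Finset.card_bij' (fun p _ => ((p.2.1, p.1.1), (p.1.2, p.2.2)))
      (fun q _ => ((q.1.2, q.2.1), (q.1.1, q.2.2))) ?_hi ?_hj ?_li ?_ri
    case _hi =>
      rintro ⟨⟨x, y⟩, u, v⟩ hp
      simp only [Finset.mem_filter, Finset.mem_product] at hp ⊢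
      obtain ⟨⟨⟨m1, m2⟩, m3, m4⟩, h5⟩ := hp
      exact ⟨⟨⟨m3, m1⟩, m2, m4⟩, by linear_combination h5⟩
    case _hj =>
      rintro ⟨⟨u, x⟩, y, v⟩ hq
      simp only [Finset.mem_filter, Finset.mem_product] at hq ⊢
      obtain ⟨⟨⟨m1, m2⟩, m3, m4⟩, h5⟩ := hq
      exact ⟨⟨⟨m2, m3⟩, m1, m4⟩, by linear_combination h5⟩
    case _li => rintro ⟨⟨x, y⟩, u, v⟩ _; rfl
    case _ri => rintro ⟨⟨u, x⟩, y, v⟩ _; rfl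
  have h23 := match_sq_le (S ×ˢ S) (S ×ˢ S) (fun p => b₂ * (p.1 - p.2)) (fun p => b₃ * (p.1 - p.2))
  have hcancel : ∀ b : ℤ, b ≠ 0 → (((S ×ˢ S) ×ˢ (S ×ˢ S)).filter fun p : (ℤ×ℤ)×(ℤ×ℤ) =>
        b * (p.1.1 - p.1.2) = b * (p.2.1 - p.2.2))
      = ((S ×ˢ S) ×ˢ (S ×ˢ S)).filter fun p => p.1.1 - p.1.2 = p.2.1 - p.2.2 := by
    intro b hb
    apply Finset.filter_congr
    intro p _
    exact mul_right_inj' hb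
  rw [hcancel b₂ hb₂, hcancel b₃ hb₃] at h23
  set Ep : ℝ := ((((S ×ˢ S) ×ˢ (S ×ˢ S)).filter fun p => p.1.1 - p.1.2 = p.2.1 - p.2.2).card : ℝ) with hEp
  have hEpnn : 0 ≤ Ep := by positivity
  have h23' : ((((S ×ˢ S) ×ˢ (S ×ˢ S)).filter fun q =>
        b₂ * (q.1.1 - q.1.2) = b₃ * (q.2.1 - q.2.2)).card : ℝ) ≤ Ep := by
    have hnn : (0:ℝ) ≤ ((((S ×ˢ S) ×ˢ (S ×ˢ S)).filter fun q =>
        b₂ * (q.1.1 - q.1.2) = b₃ * (q.2.1 - q.2.2)).card : ℝ) := by positivity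
    nlinarith [h23]
  rw [hD] at h
  rw [diagCard] at h
  calc ((((S ×ˢ (S ×ˢ S)).filter fun p => b₁ * p.1 = n - b₂ * p.2.1 - b₃ * p.2.2).card : ℝ)) ^ 2
      ≤ (S.card : ℝ) * ((((S ×ˢ S) ×ˢ (S ×ˢ S)).filter fun p =>
          n - b₂ * p.1.1 - b₃ * p.1.2 = n - b₂ * p.2.1 - b₃ * p.2.2).card : ℝ) := h
    _ ≤ (S.card : ℝ) * Ep := by
        rw [hE]
        exact mul_le_mul_of_nonneg_left h23' (by positivity)

lemma pair_bound (s : ℕ) (hs : 5 ≤ s) (a : Fin s → ℤ) (S : Finset ℤ)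
    (i j : Fin s) (hij : i ≠ j) (R : ℝ) (hR : 0 ≤ R)
    (hT : ∀ (n : ℤ) (k₁ k₂ k₃ : Fin s),
      (((S ×ˢ (S ×ˢ S)).filter fun p => a k₁ * p.1 = n - a k₂ * p.2.1 - a k₃ * p.2.2).card : ℝ) ≤ R) :
    (((Fintype.piFinset fun _ : Fin s => S).filter
        fun x => (∑ l, a l * x l = 0) ∧ x i = x j).card : ℝ)
      ≤ (S.card : ℝ) ^ (s - 4) * R := by
  -- pick three indices distinct from i, j
  have hcard2 : ({i, j} : Finset (Fin s)).card ≤ 2 := card_insert_le _ _ |>.trans (by simp)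
  have hcard : 3 ≤ ((Finset.univ : Finset (Fin s)) \ {i, j}).card := by
    rw [Finset.card_sdiff_of_subset (Finset.subset_univ _), Finset.card_univ, Fintype.card_fin]
    omega
  obtain ⟨V, hVsub, hV3⟩ := Finset.exists_subset_card_eq hcard
  obtain ⟨k₁, k₂, k₃, h12, h13, h23, rfl⟩ := Finset.card_eq_three.1 hV3
  have hk : ∀ k ∈ ({k₁, k₂, k₃} : Finset (Fin s)), k ≠ i ∧ k ≠ j := by
    intro k hkmem
    have := hVsub hkmem
    rw [Finset.mem_sdiff, Finset.mem_insert, Finset.mem_singleton] at this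
    exact ⟨fun h => this.2 (Or.inl h), fun h => this.2 (Or.inr h)⟩
  have hk1 := hk k₁ (by simp)
  have hk2 := hk k₂ (by simp)
  have hk3 := hk k₃ (by simp)
  set K : Finset (Fin s) := insert j {k₁, k₂, k₃} with hK
  have hjK : j ∉ ({k₁, k₂, k₃} : Finset (Fin s)) := by
    simp only [Finset.mem_insert, Finset.mem_singleton]
    push_neg
    exact ⟨fun h => hk1.2 h.symm, fun h => hk2.2 h.symm, fun h => hk3.2 h.symm⟩
  have hiK : i ∉ K := by
    simp only [hK, Finset.mem_insert, Finset.mem_singleton]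
    push_neg
    exact ⟨hij, fun h => hk1.1 h.symm, fun h => hk2.1 h.symm, fun h => hk3.1 h.symm⟩
  have hKcard : K.card = 4 := by
    rw [hK, Finset.card_insert_of_notMem hjK]
    rw [Finset.card_insert_of_notMem (by simp [h12, h13]),
        Finset.card_insert_of_notMem (by simp [h23]), Finset.card_singleton]
  have hk1K : k₁ ∈ K := by simp [hK]
  have hk2K : k₂ ∈ K := by simp [hK]
  have hk3K : k₃ ∈ K := by simp [hK]
  have hjK' : j ∈ K := by simp [hK]
  -- the projection map and target
  set Φ : (Fin s → ℤ) → (Fin s → ℤ) := fun x l => if l ∈ K then 0 else x l with hΦ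
  set Y : Finset (Fin s → ℤ) :=
    Fintype.piFinset (fun l => if l ∈ K then ({0} : Finset ℤ) else S) with hY
  set F : Finset (Fin s → ℤ) := (Fintype.piFinset fun _ : Fin s => S).filter
      (fun x => (∑ l, a l * x l = 0) ∧ x i = x j) with hF
  have hYcard : (Y.card : ℝ) = (S.card : ℝ) ^ (s - 4) := by
    rw [hY, Fintype.card_piFinset]
    have : ∀ l : Fin s, (if l ∈ K then ({0} : Finset ℤ) else S).card
        = if l ∈ K then 1 else S.card := by
      intro l; split <;> simp
    rw [Finset.prod_congr rfl fun l _ => this l]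
    rw [← Finset.prod_sdiff (Finset.subset_univ K)]
    rw [Finset.prod_ite_of_false (by intro l hl; exact (Finset.mem_sdiff.1 hl).2),
        Finset.prod_ite_of_true (fun l hl => hl), Finset.prod_const, Finset.prod_const_one]
    rw [Finset.card_sdiff_of_subset (Finset.subset_univ K), Finset.card_univ, Fintype.card_fin, hKcard]
    push_cast
    ring
  -- fiber bound
  set n : (Fin s → ℤ) → ℤ := fun y => -(∑ l ∈ Finset.univ \ K, a l * y l) - a j * y i with hn
  have hfiber : ∀ y : Fin s → ℤ, ((F.filter fun x => Φ x = y).card : ℝ) ≤ R := by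
    intro y
    refine le_trans ?_ (hT (n y) k₁ k₂ k₃)
    have hinj : Finset.card (F.filter fun x => Φ x = y) ≤
        Finset.card ((S ×ˢ (S ×ˢ S)).filter fun p =>
          a k₁ * p.1 = n y - a k₂ * p.2.1 - a k₃ * p.2.2) := by
      apply Finset.card_le_card_of_injOn (fun x => (x k₁, (x k₂, x k₃)))
      · intro x hx
        simp only [Finset.mem_coe] at hx ⊢
        rw [Finset.mem_filter] at hx
        obtain ⟨hxF, hxy⟩ := hx
        rw [hF, Finset.mem_filter] at hxF
        obtain ⟨hxS, hsum, hxij⟩ := hxF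
        have hmemS : ∀ l, x l ∈ S := fun l => Fintype.mem_piFinset.1 hxS l
        rw [Finset.mem_filter, Finset.mem_product, Finset.mem_product]
        refine ⟨⟨hmemS k₁, hmemS k₂, hmemS k₃⟩, ?_⟩
        -- the linear equation
        have hyl : ∀ l ∈ Finset.univ \ K, a l * y l = a l * x l := by
          intro l hl
          have hlK : l ∉ K := (Finset.mem_sdiff.1 hl).2
          have : y l = x l := by rw [← hxy]; simp [hΦ, hlK]
          rw [this]
        have hyi : y i = x i := by rw [← hxy]; simp [hΦ, hiK]
        have hsplit : ∑ l ∈ Finset.univ \ K, a l * x l + ∑ l ∈ K, a l * x l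
            = ∑ l, a l * x l := Finset.sum_sdiff (Finset.subset_univ K)
        have hKsum : ∑ l ∈ K, a l * x l
            = a j * x j + (a k₁ * x k₁ + (a k₂ * x k₂ + a k₃ * x k₃)) := by
          rw [hK, Finset.sum_insert hjK, Finset.sum_insert (by simp [h12, h13]),
              Finset.sum_insert (by simp [h23]), Finset.sum_singleton]
        have hnval : n y = -(∑ l ∈ Finset.univ \ K, a l * x l) - a j * x j := by
          rw [hn]
          simp only
          rw [Finset.sum_congr rfl hyl, hyi, hxij]
        rw [hnval]
        have := hsplit.trans hsum
        rw [hKsum] at this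
        linarith
      · intro x hx x' hx' heq
        simp only [Finset.coe_filter, Set.mem_setOf_eq] at hx hx'
        obtain ⟨hxF, hxy⟩ := hx
        obtain ⟨hx'F, hx'y⟩ := hx'
        rw [hF, Finset.mem_filter] at hxF hx'F
        have hxij := hxF.2.2
        have hx'ij := hx'F.2.2
        have h1 : x k₁ = x' k₁ := congrArg Prod.fst heq
        have h2 : x k₂ = x' k₂ := congrArg Prod.fst (congrArg Prod.snd heq)
        have h3 : x k₃ = x' k₃ := congrArg Prod.snd (congrArg Prod.snd heq)
        funext l
        by_cases hlK : l ∈ K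
        · rw [hK, Finset.mem_insert, Finset.mem_insert, Finset.mem_insert,
            Finset.mem_singleton] at hlK
          rcases hlK with rfl | rfl | rfl | rfl
          · -- l = j
            have hxi : x i = y i := by rw [← hxy]; simp [hΦ, hiK]
            have hx'i : x' i = y i := by rw [← hx'y]; simp [hΦ, hiK]
            rw [← hxij, ← hx'ij, hxi, hx'i]
          · exact h1
          · exact h2
          · exact h3
        · have hxl : x l = y l := by rw [← hxy]; simp [hΦ, hlK]
          have hx'l : x' l = y l := by rw [← hx'y]; simp [hΦ, hlK]
          rw [hxl, hx'l]
    exact_mod_cast Nat.cast_le.mpr hinj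
  -- sum over fibers
  have himg : F.image Φ ⊆ Y := by
    intro y hy
    obtain ⟨x, hx, rfl⟩ := Finset.mem_image.1 hy
    rw [hF, Finset.mem_filter] at hx
    have hmemS : ∀ l, x l ∈ S := fun l => Fintype.mem_piFinset.1 hx.1 l
    rw [hY, Fintype.mem_piFinset]
    intro l
    by_cases hlK : l ∈ K <;> simp [hΦ, hlK, hmemS l]
  have hsplit : F.card = ∑ y ∈ F.image Φ, (F.filter fun x => Φ x = y).card :=
    Finset.card_eq_sum_card_fiberwise fun x hx => Finset.mem_image_of_mem Φ hx
  calc (F.card : ℝ) = ∑ y ∈ F.image Φ, ((F.filter fun x => Φ x = y).card : ℝ) := by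
        rw [hsplit]; push_cast; rfl
    _ ≤ ∑ _y ∈ F.image Φ, R := Finset.sum_le_sum fun y _ => hfiber y
    _ = ((F.image Φ).card : ℝ) * R := by rw [Finset.sum_const, nsmul_eq_mul]
    _ ≤ (Y.card : ℝ) * R := by
        apply mul_le_mul_of_nonneg_right _ hR
        exact_mod_cast Nat.cast_le.mpr (Finset.card_le_card himg)
    _ = (S.card : ℝ) ^ (s - 4) * R := by rw [hYcard]

theorem degenerate_solutions_bound (s : ℕ) (hs : 5 ≤ s) :
    ∃ C : ℝ, 0 < C ∧ ∀ (a : Fin s → ℤ), (∀ i, a i ≠ 0) → ∀ η : ℝ, η ≤ 1 / 2 →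
      ∀ (N : ℕ) (S : Finset ℤ), S ⊆ Finset.Icc 1 (N : ℤ) →
      ((((S ×ˢ S ×ˢ S ×ˢ S).filter
          (fun p => p.1 - p.2.1 = p.2.2.1 - p.2.2.2)).card : ℝ)) ≤ (2 + η) * S.card ^ 2 →
      (((Fintype.piFinset fun _ : Fin s => S).filter
          (fun x => (∑ j, a j * x j = 0) ∧ ∃ i j, i ≠ j ∧ x i = x j)).card : ℝ) ≤
        C * (N : ℝ) ^ ((s : ℝ) / 2 - 5 / 4) := by
  refine ⟨2 * (s : ℝ) ^ 2 * 7.5 ^ s, by positivity, ?_⟩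
  intro a ha η hη N S hS hE
  have hs0 : (0:ℝ) < (s:ℝ) := by positivity
  rcases S.eq_empty_or_nonempty with rfl | hne
  · have hpi : (Fintype.piFinset fun _ : Fin s => (∅ : Finset ℤ)) = ∅ := by
      ext f
      simp only [Fintype.mem_piFinset, Finset.notMem_empty, iff_false]
      exact fun h => h ⟨0, by omega⟩
    rw [hpi, Finset.filter_empty]
    simp only [Finset.card_empty, Nat.cast_zero]
    positivity
  · obtain ⟨x0, hx0⟩ := hne
    have hx0' := Finset.mem_Icc.1 (hS hx0)
    have hN1 : 1 ≤ N := by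
      by_contra h
      push_neg at h
      interval_cases N
      omega
    set M : ℝ := (S.card : ℝ) with hM
    have hM0 : 0 ≤ M := by positivity
    have hM1 : 1 ≤ M := by
      rw [hM]
      exact_mod_cast Finset.card_pos.mpr ⟨x0, hx0⟩
    -- reindex the energy
    set Ep : ℕ := (((S ×ˢ S) ×ˢ (S ×ˢ S)).filter fun p => p.1.1 - p.1.2 = p.2.1 - p.2.2).card
      with hEp
    have hEeq : Ep = ((S ×ˢ S ×ˢ S ×ˢ S).filter
        (fun p => p.1 - p.2.1 = p.2.2.1 - p.2.2.2)).card := by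
      rw [hEp]
      refine Finset.card_bij' (fun p _ => (p.1.1, (p.1.2, p.2)))
        (fun q _ => ((q.1, q.2.1), q.2.2)) ?_ ?_ ?_ ?_
      · rintro ⟨⟨x, y⟩, z, w⟩ hp
        simp only [Finset.mem_filter, Finset.mem_product] at hp ⊢
        exact ⟨⟨hp.1.1.1, hp.1.1.2, hp.1.2⟩, hp.2⟩
      · rintro ⟨x, y, z, w⟩ hq
        simp only [Finset.mem_filter, Finset.mem_product] at hq ⊢
        exact ⟨⟨⟨hq.1.1, hq.1.2.1⟩, hq.1.2.2⟩, hq.2⟩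
      · rintro ⟨⟨x, y⟩, z, w⟩ _; rfl
      · rintro ⟨x, y, z, w⟩ _; rfl
    have hEle : (Ep : ℝ) ≤ 2.5 * M ^ 2 := by
      rw [hEeq]
      have h25 : (2 + η) * M ^ 2 ≤ 2.5 * M ^ 2 := by nlinarith [sq_nonneg M]
      exact le_trans hE h25
    -- size of S
    have hM4 := size_bound S N hS
    have hM2 : M ^ 2 ≤ 7.5 * N := by
      have h3N : (2 * (N:ℝ) + 1) ≤ 3 * N := by
        have : (1:ℝ) ≤ N := by exact_mod_cast hN1
        linarith
      have h4 : M ^ 4 ≤ 7.5 * N * M ^ 2 := by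
        calc M ^ 4 ≤ (Ep : ℝ) * (2 * N + 1) := hM4
          _ ≤ 2.5 * M ^ 2 * (3 * N) := by
              apply mul_le_mul hEle h3N (by positivity) (by positivity)
          _ = 7.5 * N * M ^ 2 := by ring
      nlinarith [h4, hM1, sq_nonneg M]
    -- pointwise T bound
    set Rb : ℝ := Real.sqrt (2.5 * M ^ 3) with hRb
    have hRnn : 0 ≤ Rb := Real.sqrt_nonneg _
    have hT : ∀ (n : ℤ) (k₁ k₂ k₃ : Fin s),
        (((S ×ˢ (S ×ˢ S)).filter fun p =>
          a k₁ * p.1 = n - a k₂ * p.2.1 - a k₃ * p.2.2).card : ℝ) ≤ Rb := by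
      intro n k₁ k₂ k₃
      have h2 := T_bound S (a k₁) (a k₂) (a k₃) (ha k₁) (ha k₂) (ha k₃) n
      rw [Real.le_sqrt (by positivity) (by positivity)]
      calc (((S ×ˢ (S ×ˢ S)).filter fun p =>
            a k₁ * p.1 = n - a k₂ * p.2.1 - a k₃ * p.2.2).card : ℝ) ^ 2
          ≤ M * (Ep : ℝ) := h2
        _ ≤ M * (2.5 * M ^ 2) := mul_le_mul_of_nonneg_left hEle hM0
        _ = 2.5 * M ^ 3 := by ring
    -- union bound over pairs
    have hsub : ((Fintype.piFinset fun _ : Fin s => S).filter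
          (fun x => (∑ j, a j * x j = 0) ∧ ∃ i j, i ≠ j ∧ x i = x j))
        ⊆ (Finset.univ.offDiag).biUnion (fun q =>
          (Fintype.piFinset fun _ : Fin s => S).filter
            (fun x => (∑ l, a l * x l = 0) ∧ x q.1 = x q.2)) := by
      intro x hx
      rw [Finset.mem_filter] at hx
      obtain ⟨hxS, hsum, i, j, hij, hxij⟩ := hx
      rw [Finset.mem_biUnion]
      exact ⟨(i, j), Finset.mem_offDiag.2 ⟨Finset.mem_univ _, Finset.mem_univ _, hij⟩,
        Finset.mem_filter.2 ⟨hxS, hsum, hxij⟩⟩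
    have hcount : (((Fintype.piFinset fun _ : Fin s => S).filter
          (fun x => (∑ j, a j * x j = 0) ∧ ∃ i j, i ≠ j ∧ x i = x j)).card : ℝ)
        ≤ (s : ℝ) ^ 2 * (M ^ (s - 4) * Rb) := by
      have h1 := Finset.card_le_card hsub
      have h2 := Finset.card_biUnion_le (s := Finset.univ.offDiag) (t := fun q =>
          (Fintype.piFinset fun _ : Fin s => S).filter
            (fun x => (∑ l, a l * x l = 0) ∧ x q.1 = x q.2))
      have h3 : ∀ q ∈ (Finset.univ : Finset (Fin s)).offDiag,
          (((Fintype.piFinset fun _ : Fin s => S).filter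
            (fun x => (∑ l, a l * x l = 0) ∧ x q.1 = x q.2)).card : ℝ) ≤ M ^ (s - 4) * Rb := by
        intro q hq
        exact pair_bound s hs a S q.1 q.2 (Finset.mem_offDiag.1 hq).2.2 Rb hRnn hT
      calc (((Fintype.piFinset fun _ : Fin s => S).filter
            (fun x => (∑ j, a j * x j = 0) ∧ ∃ i j, i ≠ j ∧ x i = x j)).card : ℝ)
          ≤ (((Finset.univ.offDiag).biUnion (fun q =>
              (Fintype.piFinset fun _ : Fin s => S).filter
                (fun x => (∑ l, a l * x l = 0) ∧ x q.1 = x q.2))).card : ℝ) := by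
            exact_mod_cast Nat.cast_le.mpr h1
        _ ≤ ∑ q ∈ Finset.univ.offDiag, (((Fintype.piFinset fun _ : Fin s => S).filter
              (fun x => (∑ l, a l * x l = 0) ∧ x q.1 = x q.2)).card : ℝ) := by
            exact_mod_cast Nat.cast_le.mpr h2
        _ ≤ ∑ _q ∈ (Finset.univ : Finset (Fin s)).offDiag, (M ^ (s - 4) * Rb) :=
            Finset.sum_le_sum h3
        _ = ((Finset.univ : Finset (Fin s)).offDiag.card : ℝ) * (M ^ (s - 4) * Rb) := by
            rw [Finset.sum_const, nsmul_eq_mul]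
        _ ≤ (s : ℝ) ^ 2 * (M ^ (s - 4) * Rb) := by
            apply mul_le_mul_of_nonneg_right _ (by positivity)
            have : (Finset.univ : Finset (Fin s)).offDiag.card = s * s - s := by
              rw [Finset.offDiag_card, Finset.card_univ, Fintype.card_fin]
            rw [this]
            have hle : s * s - s ≤ s * s := Nat.sub_le _ _
            calc ((s * s - s : ℕ) : ℝ) ≤ ((s * s : ℕ) : ℝ) := by exact_mod_cast hle
              _ = (s : ℝ) ^ 2 := by push_cast; ring
    -- numeric endgame
    refine le_trans hcount ?_
    set P : ℝ := 7.5 * N with hP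
    have hPpos : 0 < P := by positivity
    set Q : ℝ := Real.sqrt P with hQ
    have hQ0 : 0 ≤ Q := Real.sqrt_nonneg _
    have hMQ : M ≤ Q := by
      rw [hQ]
      rw [Real.le_sqrt hM0 hPpos.le]
      exact hM2
    have h1 : M ^ (s - 4) ≤ Q ^ (s - 4) := pow_le_pow_left₀ hM0 hMQ _
    have h2 : Rb ≤ 2 * Real.sqrt (Q ^ 3) := by
      rw [hRb]
      have hcube : M ^ 3 ≤ Q ^ 3 := pow_le_pow_left₀ hM0 hMQ 3
      have : Real.sqrt (2.5 * M ^ 3) ≤ Real.sqrt (4 * Q ^ 3) := by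
        apply Real.sqrt_le_sqrt
        nlinarith [pow_nonneg hM0 3]
      refine this.trans ?_
      rw [show (4 : ℝ) * Q ^ 3 = 2 ^ 2 * Q ^ 3 by norm_num, Real.sqrt_mul (by positivity),
        Real.sqrt_sq (by norm_num : (0:ℝ) ≤ 2)]
    have hexp : Q ^ (s - 4) * Real.sqrt (Q ^ 3) = P ^ ((s : ℝ) / 2 - 5 / 4) := by
      have hqr : Q = P ^ ((1 : ℝ) / 2) := by rw [hQ, Real.sqrt_eq_rpow]
      have e1 : Q ^ (s - 4) = P ^ ((1 : ℝ) / 2 * ((s : ℝ) - 4)) := by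
        rw [hqr, ← Real.rpow_natCast (P ^ ((1 : ℝ) / 2)) (s - 4), ← Real.rpow_mul hPpos.le]
        congr 1
        have : ((s - 4 : ℕ) : ℝ) = (s : ℝ) - 4 := by
          have h4 : 4 ≤ s := by omega
          push_cast [h4]
          ring
        rw [this]
      have e2 : Real.sqrt (Q ^ 3) = P ^ ((3 : ℝ) / 4) := by
        rw [hqr, Real.sqrt_eq_rpow, ← Real.rpow_natCast (P ^ ((1 : ℝ) / 2)) 3,
          ← Real.rpow_mul hPpos.le, ← Real.rpow_mul hPpos.le]
        norm_num
      rw [e1, e2, ← Real.rpow_add hPpos]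
      congr 1
      ring
    have hsplitP : P ^ ((s : ℝ) / 2 - 5 / 4)
        = (7.5 : ℝ) ^ ((s : ℝ) / 2 - 5 / 4) * (N : ℝ) ^ ((s : ℝ) / 2 - 5 / 4) := by
      rw [hP, Real.mul_rpow (by norm_num) (by positivity)]
    have h75 : (7.5 : ℝ) ^ ((s : ℝ) / 2 - 5 / 4) ≤ (7.5 : ℝ) ^ (s : ℕ) := by
      rw [← Real.rpow_natCast (7.5 : ℝ) s]
      apply Real.rpow_le_rpow_of_exponent_le (by norm_num)
      have : (0:ℝ) ≤ (s:ℝ) := by positivity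
      linarith
    calc (s : ℝ) ^ 2 * (M ^ (s - 4) * Rb)
        ≤ (s : ℝ) ^ 2 * (Q ^ (s - 4) * (2 * Real.sqrt (Q ^ 3))) := by
          apply mul_le_mul_of_nonneg_left _ (by positivity)
          exact mul_le_mul h1 h2 hRnn (by positivity)
      _ = 2 * (s : ℝ) ^ 2 * (Q ^ (s - 4) * Real.sqrt (Q ^ 3)) := by ring
      _ = 2 * (s : ℝ) ^ 2 * ((7.5 : ℝ) ^ ((s : ℝ) / 2 - 5 / 4) * (N : ℝ) ^ ((s : ℝ) / 2 - 5 / 4)) := by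
          rw [hexp, hsplitP]
      _ ≤ 2 * (s : ℝ) ^ 2 * ((7.5 : ℝ) ^ (s : ℕ) * (N : ℝ) ^ ((s : ℝ) / 2 - 5 / 4)) := by
          apply mul_le_mul_of_nonneg_left _ (by positivity)
          apply mul_le_mul_of_nonneg_right h75 (Real.rpow_nonneg (by positivity) _)
      _ = 2 * (s : ℝ) ^ 2 * 7.5 ^ s * (N : ℝ) ^ ((s : ℝ) / 2 - 5 / 4) := by ring
end
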